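/- arXiv:0704.3238 — 3 statements merged into one kernel-verified Lean document; each statement's English description precedes it below -/
import Mathlib

section
/- A formula of L_CSTIT is valid in all Kripke models that satisfy the general permutation property (with each R_i an equivalence relation) if and only if it is provable from the axiom schemas S5(i) for every agent i, Def(□): □φ ↔ [1][0]φ, and (GPerm_k): ⟨l⟩⟨m⟩φ → ⟨n⟩⋀_{i ≤ k, i ≠ n}⟨i⟩φ for all k and all agents l,m,n, by the rules of modus ponens and [i]-necessitation; this holds both when Agt is finite with |Agt| ≥ 2 and when Agt = ℕ. -/
/-! Common infrastructure for STIT logic (Chellas STIT, deliberative STIT,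
historic necessity), following Balbiani, Herzig & Troquard,
"Alternative axiomatics and complexity of deliberative STIT theories". -/

namespace STIT

/-- Formulas of the (combined) STIT language, over a countable set of atoms
(indexed by `ℕ`) and agents indexed by `ℕ` (the actual agent set `Agt` is an
initial segment of `ℕ`).  `cstit i` is the Chellas STIT operator `[i]`,
`dstit i` is the deliberative STIT operator `[i dstit: ·]`, and `box` is the
historic necessity operator `□`. -/
inductive Fml : Type
  | atm : ℕ → Fml
  | neg : Fml → Fml
  | and : Fml → Fml → Fml
  | cstit : ℕ → Fml → Fml
  | dstit : ℕ → Fml → Fml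
  | box : Fml → Fml
  deriving DecidableEq

/-- Material implication `φ → ψ`, as the abbreviation `¬(φ ∧ ¬ψ)`. -/
def impF (φ ψ : Fml) : Fml := .neg (.and φ (.neg ψ))

/-- Disjunction `φ ∨ ψ`, as the abbreviation `¬(¬φ ∧ ¬ψ)`. -/
def orF (φ ψ : Fml) : Fml := .neg (.and (.neg φ) (.neg ψ))

/-- Biimplication `φ ↔ ψ`, as the abbreviation `(φ → ψ) ∧ (ψ → φ)`. -/
def iffF (φ ψ : Fml) : Fml := .and (impF φ ψ) (impF ψ φ)

/-- `◇φ`, abbreviating `¬□¬φ`. -/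
def diaF (φ : Fml) : Fml := .neg (.box (.neg φ))

/-- `⟨i⟩φ`, abbreviating `¬[i]¬φ`. -/
def posF (i : ℕ) (φ : Fml) : Fml := .neg (.cstit i (.neg φ))

/-- Conjunction of a (finite) list of formulas; the empty conjunction is a
tautology `⊤`. -/
def conjF : List Fml → Fml
  | [] => impF (.atm 0) (.atm 0)
  | [φ] => φ
  | φ :: l => .and φ (conjF l)

/-- The length `‖φ‖` of a formula. -/
def len : Fml → ℕ
  | .atm _ => 1
  | .neg φ => 1 + len φ
  | .and φ ψ => 3 + len φ + len ψ
  | .cstit _ φ => 3 + len φ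
  | .dstit _ φ => 5 + len φ
  | .box φ => 1 + len φ

/-- The set `sf φ` of subformulas of `φ`. -/
def sf : Fml → Finset Fml
  | .atm p => {.atm p}
  | .neg φ => insert (.neg φ) (sf φ)
  | .and φ ψ => insert (.and φ ψ) (sf φ ∪ sf ψ)
  | .cstit i φ => insert (.cstit i φ) (sf φ)
  | .dstit i φ => insert (.dstit i φ) (sf φ)
  | .box φ => insert (.box φ) (sf φ)

/-- The set of atoms occurring in a formula. -/
def atoms : Fml → Finset ℕ
  | .atm p => {p}
  | .neg φ => atoms φ
  | .and φ ψ => atoms φ ∪ atoms ψ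
  | .cstit _ φ => atoms φ
  | .dstit _ φ => atoms φ
  | .box φ => atoms φ

/-- `φ` contains no deliberative STIT operator (so `φ` belongs to `L_CSTIT`
when it moreover only uses box/cstit). -/
def NoDstit : Fml → Prop
  | .atm _ => True
  | .neg φ => NoDstit φ
  | .and φ ψ => NoDstit φ ∧ NoDstit ψ
  | .cstit _ φ => NoDstit φ
  | .dstit _ _ => False
  | .box φ => NoDstit φ

/-- `φ` contains no Chellas STIT operator (so `φ` belongs to `L_DSTIT`). -/
def NoCstit : Fml → Prop
  | .atm _ => True
  | .neg φ => NoCstit φ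
  | .and φ ψ => NoCstit φ ∧ NoCstit ψ
  | .cstit _ _ => False
  | .dstit _ φ => NoCstit φ
  | .box φ => NoCstit φ

/-- `φ` contains no historic necessity operator. -/
def NoBox : Fml → Prop
  | .atm _ => True
  | .neg φ => NoBox φ
  | .and φ ψ => NoBox φ ∧ NoBox ψ
  | .cstit _ φ => NoBox φ
  | .dstit _ φ => NoBox φ
  | .box _ => False

/-- All agents occurring in `φ` belong to `A`. -/
def AgentsIn (A : Set ℕ) : Fml → Prop
  | .atm _ => True
  | .neg φ => AgentsIn A φ
  | .and φ ψ => AgentsIn A φ ∧ AgentsIn A ψ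
  | .cstit i φ => i ∈ A ∧ AgentsIn A φ
  | .dstit i φ => i ∈ A ∧ AgentsIn A φ
  | .box φ => AgentsIn A φ

/-- `A` is an initial segment `{0, 1, …}` of `ℕ`. -/
def InitSeg (A : Set ℕ) : Prop := ∀ i ∈ A, ∀ j : ℕ, j ≤ i → j ∈ A

/-- A BT+AC model over the agent set `Agt`: a nonempty tree-like strict
order of moments, together with a choice function and a valuation.
Histories are represented as maximal chains (maximal linearly `<`-ordered
subsets) of moments; `Choice i w` is, for each agent `i ∈ Agt`, a partition
of the set `H_w` of histories passing through `w` into nonempty cells,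
satisfying the superadditivity constraint (independence of agents). -/
structure BTAC (Agt : Set ℕ) where
  W : Type
  neW : Nonempty W
  lt : W → W → Prop
  lt_irrefl : ∀ w : W, ¬ lt w w
  lt_trans : ∀ {a b c : W}, lt a b → lt b c → lt a c
  treelike : ∀ w₁ w₂ w₃ : W, lt w₁ w₃ → lt w₂ w₃ → w₁ = w₂ ∨ lt w₁ w₂ ∨ lt w₂ w₁
  Choice : ℕ → W → Set (Set (Set W))
  V : ℕ → W → Set W → Prop
  choice_hist : ∀ i ∈ Agt, ∀ w : W, ∀ Q ∈ Choice i w, ∀ h ∈ Q,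
      IsMaxChain lt h ∧ w ∈ h
  choice_cell_nonempty : ∀ i ∈ Agt, ∀ w : W, ∀ Q ∈ Choice i w, Q.Nonempty
  choice_nonempty : ∀ i ∈ Agt, ∀ w : W, (Choice i w).Nonempty
  choice_cover : ∀ i ∈ Agt, ∀ w : W, ∀ h : Set W,
      IsMaxChain lt h → w ∈ h → ∃ Q ∈ Choice i w, h ∈ Q
  choice_disjoint : ∀ i ∈ Agt, ∀ w : W, ∀ Q ∈ Choice i w, ∀ Q' ∈ Choice i w,
      (Q ∩ Q').Nonempty → Q = Q'
  superadd : ∀ w : W, ∀ s : ℕ → Set (Set W),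
      (∀ i ∈ Agt, s i ∈ Choice i w) → (⋂ i ∈ Agt, s i).Nonempty

/-- Truth of a formula at an index `w/h` of a BT+AC model.  (`[i]φ` holds at
`w/h` iff `φ` holds at `w/h'` for every history `h'` in the cell of
`Choice i w` containing `h`; `□φ` holds at `w/h` iff `φ` holds at `w/h'` for
every history `h'` through `w`; `[i dstit: φ]` additionally requires a
witness history through `w` where `φ` fails.) -/
def truth {Agt : Set ℕ} (M : BTAC Agt) : Fml → M.W → Set M.W → Prop
  | .atm p, w, h => M.V p w h
  | .neg φ, w, h => ¬ truth M φ w h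
  | .and φ ψ, w, h => truth M φ w h ∧ truth M ψ w h
  | .cstit i φ, w, h =>
      ∀ h' : Set M.W, (∃ Q ∈ M.Choice i w, h ∈ Q ∧ h' ∈ Q) → truth M φ w h'
  | .dstit i φ, w, h =>
      (∀ h' : Set M.W, (∃ Q ∈ M.Choice i w, h ∈ Q ∧ h' ∈ Q) → truth M φ w h') ∧
      (∃ h'' : Set M.W, IsMaxChain M.lt h'' ∧ w ∈ h'' ∧ ¬ truth M φ w h'')
  | .box φ, w, h =>
      ∀ h' : Set M.W, IsMaxChain M.lt h' → w ∈ h' → truth M φ w h'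

/-- Validity in BT+AC structures over the agent set `Agt`: truth at every
index `w/h` (with `h` a history and `w ∈ h`) of every BT+AC model. -/
def validBTAC (Agt : Set ℕ) (φ : Fml) : Prop :=
  ∀ M : BTAC Agt, ∀ w : M.W, ∀ h : Set M.W,
    IsMaxChain M.lt h → w ∈ h → truth M φ w h

/-- Satisfiability in BT+AC structures over the agent set `Agt`. -/
def satBTAC (Agt : Set ℕ) (φ : Fml) : Prop :=
  ∃ M : BTAC Agt, ∃ w : M.W, ∃ h : Set M.W,
    IsMaxChain M.lt h ∧ w ∈ h ∧ truth M φ w h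

/-- A Kripke model over the agent set `Agt`: a nonempty set of worlds, an
equivalence relation `R i` for each agent `i ∈ Agt`, and a valuation. -/
structure KModel (Agt : Set ℕ) where
  W : Type
  neW : Nonempty W
  R : ℕ → W → W → Prop
  equiv : ∀ i ∈ Agt, Equivalence (R i)
  V : ℕ → Set W

/-- The general permutation property: for all worlds `w, v` and agents
`l, m, n ∈ Agt`, if `⟨w,v⟩ ∈ R_l ∘ R_m` then there is `u` with `⟨w,u⟩ ∈ R_n`
and `⟨u,v⟩ ∈ R_i` for every agent `i ≠ n`. -/
def GenPerm {Agt : Set ℕ} (M : KModel Agt) : Prop :=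
  ∀ w v : M.W, ∀ l ∈ Agt, ∀ m ∈ Agt, ∀ n ∈ Agt,
    Relation.Comp (M.R l) (M.R m) w v →
    ∃ u : M.W, M.R n w u ∧ ∀ i ∈ Agt, i ≠ n → M.R i u v

/-- Truth in a Kripke model: `[i]` is interpreted by `R i`, and `□` by the
composition `R 1 ∘ R 0` (so that `Def(□)` holds). -/
def ktruth {Agt : Set ℕ} (M : KModel Agt) : Fml → M.W → Prop
  | .atm p, w => w ∈ M.V p
  | .neg φ, w => ¬ ktruth M φ w
  | .and φ ψ, w => ktruth M φ w ∧ ktruth M ψ w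
  | .cstit i φ, w => ∀ u : M.W, M.R i w u → ktruth M φ u
  | .dstit i φ, w =>
      (∀ u : M.W, M.R i w u → ktruth M φ u) ∧
      (∃ u : M.W, Relation.Comp (M.R 1) (M.R 0) w u ∧ ¬ ktruth M φ u)
  | .box φ, w => ∀ u : M.W, Relation.Comp (M.R 1) (M.R 0) w u → ktruth M φ u

/-- Validity in all Kripke models over `Agt` (with equivalence relations)
satisfying the general permutation property. -/
def validK (Agt : Set ℕ) (φ : Fml) : Prop :=
  ∀ M : KModel Agt, GenPerm M → ∀ w : M.W, ktruth M φ w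

/-- Satisfiability in some Kripke model over `Agt` (with equivalence
relations) satisfying the general permutation property. -/
def satK (Agt : Set ℕ) (φ : Fml) : Prop :=
  ∃ M : KModel Agt, GenPerm M ∧ ∃ w : M.W, ktruth M φ w

/-- `φ` is (a substitution instance of) a propositional tautology: it is true
under every assignment of truth values to formulas that respects `¬` and `∧`. -/
def Taut (φ : Fml) : Prop :=
  ∀ v : Fml → Prop,
    (∀ ψ : Fml, v (.neg ψ) ↔ ¬ v ψ) →
    (∀ ψ χ : Fml, v (.and ψ χ) ↔ (v ψ ∧ v χ)) →
    v φ

/-- The S5 axiom schemas (K, T and 5) for a box-like operator `op`. -/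
def s5Set (op : Fml → Fml) : Set Fml :=
  {χ | (∃ φ ψ : Fml, χ = impF (op (impF φ ψ)) (impF (op φ) (op ψ))) ∨
       (∃ φ : Fml, χ = impF (op φ) φ) ∨
       (∃ φ : Fml, χ = impF (.neg (op (.neg φ))) (op (.neg (op (.neg φ)))))}

/-- The schemas `(Incl_i) : □φ → [i]φ` for each agent `i ∈ Agt`. -/
def inclSet (Agt : Set ℕ) : Set Fml :=
  {χ | ∃ i ∈ Agt, ∃ φ : Fml, χ = impF (.box φ) (.cstit i φ)}

/-- The formula `(AAIA_k) : ◇φ → ⟨k⟩⋀_{0 ≤ i < k}⟨i⟩φ`. -/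
def aaiaFml (k : ℕ) (φ : Fml) : Fml :=
  impF (diaF φ) (posF k (conjF ((List.range k).map (fun i => posF i φ))))

/-- The alternative independence schemas `(AAIA_k)` for all `k ≥ 1` with
agents `0, …, k ∈ Agt`. -/
def aaiaSet (Agt : Set ℕ) : Set Fml :=
  {χ | ∃ k : ℕ, 1 ≤ k ∧ (∀ i ≤ k, i ∈ Agt) ∧ ∃ φ : Fml, χ = aaiaFml k φ}

/-- The formula `(AIA_k) : (◇[0]φ₀ ∧ … ∧ ◇[k]φₖ) → ◇([0]φ₀ ∧ … ∧ [k]φₖ)`. -/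
def aiaFml (k : ℕ) (φs : ℕ → Fml) : Fml :=
  impF (conjF ((List.range (k+1)).map (fun i => diaF (.cstit i (φs i)))))
       (diaF (conjF ((List.range (k+1)).map (fun i => .cstit i (φs i)))))

/-- The formula `(GPerm_k) : ⟨l⟩⟨m⟩φ → ⟨n⟩⋀_{i ≤ k, i ≠ n}⟨i⟩φ`. -/
def gpermFml (k l m n : ℕ) (φ : Fml) : Fml :=
  impF (posF l (posF m φ))
       (posF n (conjF (((List.range (k+1)).filter (fun i => i != n)).map
          (fun i => posF i φ))))

/-- The general permutation schemas `(GPerm_k)` for all `k ≥ 0` (with agents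
`0, …, k ∈ Agt`) and agents `l, m, n ∈ Agt`. -/
def gpermSet (Agt : Set ℕ) : Set Fml :=
  {χ | ∃ k : ℕ, (∀ i ≤ k, i ∈ Agt) ∧
       ∃ l ∈ Agt, ∃ m ∈ Agt, ∃ n ∈ Agt, ∃ φ : Fml, χ = gpermFml k l m n φ}

/-- The definition schema `Def(□) : □φ ↔ [1][0]φ`. -/
def defBoxSet : Set Fml :=
  {χ | ∃ φ : Fml, χ = iffF (.box φ) (.cstit 1 (.cstit 0 φ))}

/-- The alternative axiomatics of Section 3: `S5(□)`, `S5(i)` for each agent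
`i ∈ Agt`, `(Incl_i)` and `(AAIA_k)`. -/
def xuAltAx (Agt : Set ℕ) : Set Fml :=
  s5Set Fml.box ∪ (⋃ i ∈ Agt, s5Set (fun φ => Fml.cstit i φ)) ∪
    inclSet Agt ∪ aaiaSet Agt

/-- The axiomatics of Section 4: `S5(i)` for each agent `i ∈ Agt`, `Def(□)`
and `(GPerm_k)`. -/
def gpermAx (Agt : Set ℕ) : Set Fml :=
  (⋃ i ∈ Agt, s5Set (fun φ => Fml.cstit i φ)) ∪ defBoxSet ∪ gpermSet Agt

/-- Hilbert-style provability from the axiom set `Ax` (together with all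
propositional tautologies) by modus ponens and `□`-necessitation. -/
inductive ProvB (Ax : Set Fml) : Fml → Prop
  | taut {φ : Fml} : Taut φ → ProvB Ax φ
  | axm {φ : Fml} : φ ∈ Ax → ProvB Ax φ
  | mp {φ ψ : Fml} : ProvB Ax (impF φ ψ) → ProvB Ax φ → ProvB Ax ψ
  | nec {φ : Fml} : ProvB Ax φ → ProvB Ax (.box φ)

/-- Hilbert-style provability from the axiom set `Ax` (together with all
propositional tautologies) by modus ponens and `[i]`-necessitation for each
agent `i ∈ Agt`. -/
inductive ProvC (Agt : Set ℕ) (Ax : Set Fml) : Fml → Prop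
  | taut {φ : Fml} : Taut φ → ProvC Agt Ax φ
  | axm {φ : Fml} : φ ∈ Ax → ProvC Agt Ax φ
  | mp {φ ψ : Fml} : ProvC Agt Ax (impF φ ψ) → ProvC Agt Ax φ → ProvC Agt Ax ψ
  | nec {i : ℕ} {φ : Fml} : i ∈ Agt → ProvC Agt Ax φ → ProvC Agt Ax (.cstit i φ)

/-- The biimplication `B_ψ` relating the fresh atom `p_ψ` (given by `pA ψ`)
with `ψ`, used in the translation `tr` from `L_DSTIT` to `L_CSTIT`:
`B_{[i dstit: φ]} = (p_{[i dstit: φ]} ↔ [i]p_φ ∧ ¬□p_φ)`. -/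
def Beq (pA : Fml → ℕ) : Fml → Fml
  | .atm q => iffF (.atm (pA (.atm q))) (.atm q)
  | .neg φ => iffF (.atm (pA (.neg φ))) (.neg (.atm (pA φ)))
  | .and φ ψ => iffF (.atm (pA (.and φ ψ))) (.and (.atm (pA φ)) (.atm (pA ψ)))
  | .cstit i φ => iffF (.atm (pA (.cstit i φ))) (.cstit i (.atm (pA φ)))
  | .dstit i φ => iffF (.atm (pA (.dstit i φ)))
      (.and (.cstit i (.atm (pA φ))) (.neg (.box (.atm (pA φ)))))
  | .box φ => iffF (.atm (pA (.box φ))) (.box (.atm (pA φ)))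

/-- The biimplication `B'_ψ` used in the translation `tr'` from `L_CSTIT` to
`L_DSTIT`: `B'_{[i]φ} = (p_{[i]φ} ↔ [i dstit: p_φ] ∨ □p_φ)`. -/
def Beq' (pA : Fml → ℕ) : Fml → Fml
  | .atm q => iffF (.atm (pA (.atm q))) (.atm q)
  | .neg φ => iffF (.atm (pA (.neg φ))) (.neg (.atm (pA φ)))
  | .and φ ψ => iffF (.atm (pA (.and φ ψ))) (.and (.atm (pA φ)) (.atm (pA ψ)))
  | .cstit i φ => iffF (.atm (pA (.cstit i φ)))
      (orF (.dstit i (.atm (pA φ))) (.box (.atm (pA φ))))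
  | .dstit i φ => iffF (.atm (pA (.dstit i φ))) (.dstit i (.atm (pA φ)))
  | .box φ => iffF (.atm (pA (.box φ))) (.box (.atm (pA φ)))

/-- The translation `tr(φ₀) = p_{φ₀} ∧ ⋀_{ψ ∈ sf(φ₀)} □B_ψ`. -/
noncomputable def tr (pA : Fml → ℕ) (φ0 : Fml) : Fml :=
  .and (.atm (pA φ0)) (conjF ((sf φ0).toList.map (fun ψ => .box (Beq pA ψ))))

/-- The translation `tr'(φ₀) = p_{φ₀} ∧ ⋀_{ψ ∈ sf(φ₀)} □B'_ψ`. -/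
noncomputable def tr' (pA : Fml → ℕ) (φ0 : Fml) : Fml :=
  .and (.atm (pA φ0)) (conjF ((sf φ0).toList.map (fun ψ => .box (Beq' pA ψ))))

/-- The atoms `p_ψ = pA ψ` for `ψ ∈ sf φ₀` are pairwise distinct and fresh
(none occurs in `φ₀`). -/
def Fresh (pA : Fml → ℕ) (φ0 : Fml) : Prop :=
  Set.InjOn pA ↑(sf φ0) ∧ ∀ ψ ∈ sf φ0, pA ψ ∉ atoms φ0



/-! ### Infrastructure for the proof of Kripke completeness -/

section KripkeCompleteness

open Classical

/-- Evaluation of `conjF` under any `¬`/`∧`-respecting valuation. -/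
lemma conjF_val (v : Fml → Prop) (hn : ∀ ψ : Fml, v (.neg ψ) ↔ ¬ v ψ)
    (ha : ∀ ψ χ : Fml, v (.and ψ χ) ↔ (v ψ ∧ v χ)) :
    ∀ L : List Fml, v (conjF L) ↔ ∀ ψ ∈ L, v ψ
  | [] => by simp [conjF, impF, hn, ha]
  | [φ] => by simp [conjF]
  | φ :: ψ :: l => by
      have ih := conjF_val v hn ha (ψ :: l)
      simp only [conjF, ha, ih, List.mem_cons]
      constructor
      · rintro ⟨h1, h2⟩ χ (rfl | hχ)
        · exact h1
        · exact h2 χ (by simpa using hχ)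
      · intro h
        exact ⟨h φ (Or.inl rfl), fun χ hχ => h χ (Or.inr (by simpa using hχ))⟩

lemma val_impF (v : Fml → Prop) (hn : ∀ ψ : Fml, v (.neg ψ) ↔ ¬ v ψ)
    (ha : ∀ ψ χ : Fml, v (.and ψ χ) ↔ (v ψ ∧ v χ)) (A B : Fml) :
    v (impF A B) ↔ (v A → v B) := by
  show v (.neg (.and A (.neg B))) ↔ _
  rw [hn, ha, hn]; tauto

lemma val_iffF (v : Fml → Prop) (hn : ∀ ψ : Fml, v (.neg ψ) ↔ ¬ v ψ)
    (ha : ∀ ψ χ : Fml, v (.and ψ χ) ↔ (v ψ ∧ v χ)) (A B : Fml) :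
    v (iffF A B) ↔ (v A ↔ v B) := by
  show v (.and (impF A B) (impF B A)) ↔ _
  rw [ha, val_impF v hn ha, val_impF v hn ha]; tauto

lemma ktruth_neg {Agt : Set ℕ} (M : KModel Agt) (φ : Fml) (w : M.W) :
    ktruth M (.neg φ) w ↔ ¬ ktruth M φ w := Iff.rfl

lemma ktruth_and {Agt : Set ℕ} (M : KModel Agt) (φ ψ : Fml) (w : M.W) :
    ktruth M (.and φ ψ) w ↔ (ktruth M φ w ∧ ktruth M ψ w) := Iff.rfl

lemma ktruth_impF {Agt : Set ℕ} (M : KModel Agt) (φ ψ : Fml) (w : M.W) :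
    ktruth M (impF φ ψ) w ↔ (ktruth M φ w → ktruth M ψ w) :=
  val_impF (fun χ => ktruth M χ w) (fun _ => Iff.rfl) (fun _ _ => Iff.rfl) φ ψ

lemma ktruth_conjF {Agt : Set ℕ} (M : KModel Agt) (L : List Fml) (w : M.W) :
    ktruth M (conjF L) w ↔ ∀ ψ ∈ L, ktruth M ψ w :=
  conjF_val (fun χ => ktruth M χ w) (fun _ => Iff.rfl) (fun _ _ => Iff.rfl) L

lemma ktruth_posF {Agt : Set ℕ} (M : KModel Agt) (i : ℕ) (φ : Fml) (w : M.W) :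
    ktruth M (posF i φ) w ↔ ∃ u : M.W, M.R i w u ∧ ktruth M φ u := by
  show (¬ ∀ u : M.W, M.R i w u → ¬ ktruth M φ u) ↔ _
  push_neg
  simp

/-- Soundness of the `gpermAx` axiomatics. -/
lemma gperm_soundness {Agt : Set ℕ} (φ : Fml)
    (h : ProvC Agt (gpermAx Agt) φ) : validK Agt φ := by
  intro M hM w
  induction h generalizing w with
  | @taut ψ ht =>
      exact ht (fun χ => ktruth M χ w) (fun _ => Iff.rfl) (fun _ _ => Iff.rfl)
  | @mp ψ χ h1 h2 ih1 ih2 =>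
      exact (ktruth_impF M ψ χ w).1 (ih1 w) (ih2 w)
  | @nec i ψ hi h ih =>
      intro u _; exact ih u
  | @axm ψ hmem =>
      rcases hmem with ((hs5 | hdef) | hgp)
      · -- S5 axioms for an agent i ∈ Agt
        simp only [Set.mem_iUnion] at hs5
        obtain ⟨i, hi, hs5⟩ := hs5
        have heq := M.equiv i hi
        rcases hs5 with ⟨α, β, rfl⟩ | ⟨α, rfl⟩ | ⟨α, rfl⟩
        · rw [ktruth_impF]
          intro h1
          rw [ktruth_impF]
          intro h2 u hu
          exact (ktruth_impF M α β u).1 (h1 u hu) (h2 u hu)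
        · rw [ktruth_impF]
          intro h1
          exact h1 w (heq.refl w)
        · rw [ktruth_impF]
          intro h1 u hu h2
          apply h1
          intro x hx
          exact h2 x (heq.trans (heq.symm hu) hx)
      · -- Def(□)
        obtain ⟨α, rfl⟩ := hdef
        have : ktruth M (.box α) w ↔ ktruth M (.cstit 1 (.cstit 0 α)) w := by
          constructor
          · intro h u hu x hx
            exact h x ⟨u, hu, hx⟩
          · rintro h u ⟨x, hx, hxu⟩
            exact h x hx u hxu
        exact (val_iffF (fun χ => ktruth M χ w) (fun _ => Iff.rfl)
          (fun _ _ => Iff.rfl) _ _).2 this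
      · -- GPerm_k
        obtain ⟨k, hk, l, hl, m, hm, n, hn, α, rfl⟩ := hgp
        rw [gpermFml, ktruth_impF]
        intro h1
        rw [ktruth_posF] at h1
        obtain ⟨x, hwx, h2⟩ := h1
        rw [ktruth_posF] at h2
        obtain ⟨y, hxy, hy⟩ := h2
        obtain ⟨u, hwu, hu⟩ := hM w y l hl m hm n hn ⟨x, hwx, hxy⟩
        rw [ktruth_posF]
        refine ⟨u, hwu, ?_⟩
        rw [ktruth_conjF]
        intro ψ hψ
        simp only [List.mem_map, List.mem_filter, List.mem_range] at hψ
        obtain ⟨i, ⟨hik, hin⟩, rfl⟩ := hψ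
        rw [ktruth_posF]
        refine ⟨y, hu i (hk i (Nat.lt_succ_iff.1 hik)) ?_, hy⟩
        simpa using hin


/-! ### Provability helpers -/

variable {Agt : Set ℕ}

lemma pc1 {A B : Fml} (t : Taut (impF A B))
    (hA : ProvC Agt (gpermAx Agt) A) : ProvC Agt (gpermAx Agt) B :=
  ProvC.mp (ProvC.taut t) hA

lemma pc2 {A B C : Fml} (t : Taut (impF A (impF B C)))
    (hA : ProvC Agt (gpermAx Agt) A) (hB : ProvC Agt (gpermAx Agt) B) :
    ProvC Agt (gpermAx Agt) C :=
  ProvC.mp (pc1 t hA) hB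

lemma axK {i : ℕ} (hi : i ∈ Agt) (φ ψ : Fml) :
    ProvC Agt (gpermAx Agt)
      (impF (.cstit i (impF φ ψ)) (impF (.cstit i φ) (.cstit i ψ))) :=
  ProvC.axm (Or.inl (Or.inl (by
    simp only [Set.mem_iUnion]
    exact ⟨i, hi, Or.inl ⟨φ, ψ, rfl⟩⟩)))

lemma axT {i : ℕ} (hi : i ∈ Agt) (φ : Fml) :
    ProvC Agt (gpermAx Agt) (impF (.cstit i φ) φ) :=
  ProvC.axm (Or.inl (Or.inl (by
    simp only [Set.mem_iUnion]
    exact ⟨i, hi, Or.inr (Or.inl ⟨φ, rfl⟩)⟩)))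

lemma ax5 {i : ℕ} (hi : i ∈ Agt) (φ : Fml) :
    ProvC Agt (gpermAx Agt)
      (impF (.neg (.cstit i (.neg φ))) (.cstit i (.neg (.cstit i (.neg φ))))) :=
  ProvC.axm (Or.inl (Or.inl (by
    simp only [Set.mem_iUnion]
    exact ⟨i, hi, Or.inr (Or.inr ⟨φ, rfl⟩)⟩)))

lemma axDef (φ : Fml) :
    ProvC Agt (gpermAx Agt) (iffF (.box φ) (.cstit 1 (.cstit 0 φ))) :=
  ProvC.axm (Or.inl (Or.inr ⟨φ, rfl⟩))

lemma kmp {i : ℕ} (hi : i ∈ Agt) {φ ψ : Fml}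
    (h : ProvC Agt (gpermAx Agt) (impF φ ψ)) :
    ProvC Agt (gpermAx Agt) (impF (.cstit i φ) (.cstit i ψ)) :=
  ProvC.mp (axK hi φ ψ) (ProvC.nec hi h)

lemma impSelf (φ : Fml) : ProvC Agt (gpermAx Agt) (impF φ φ) :=
  ProvC.taut (by
    intro v hn ha; rw [val_impF v hn ha]; exact id)

lemma impTrans {A B C : Fml} (h1 : ProvC Agt (gpermAx Agt) (impF A B))
    (h2 : ProvC Agt (gpermAx Agt) (impF B C)) :
    ProvC Agt (gpermAx Agt) (impF A C) := by
  refine pc2 ?_ h1 h2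
  intro v hn ha
  simp only [val_impF v hn ha]
  tauto

lemma contraP {A B : Fml} (h : ProvC Agt (gpermAx Agt) (impF A B)) :
    ProvC Agt (gpermAx Agt) (impF (.neg B) (.neg A)) := by
  refine pc1 ?_ h
  intro v hn ha
  simp only [val_impF v hn ha, hn]
  tauto

lemma box_and {i : ℕ} (hi : i ∈ Agt) (φ ψ : Fml) :
    ProvC Agt (gpermAx Agt)
      (impF (.cstit i φ) (impF (.cstit i ψ) (.cstit i (.and φ ψ)))) := by
  have h1 : ProvC Agt (gpermAx Agt) (impF φ (impF ψ (.and φ ψ))) :=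
    ProvC.taut (by
      intro v hn ha
      simp only [val_impF v hn ha, ha]
      tauto)
  exact impTrans (kmp hi h1) (axK hi ψ (.and φ ψ))

lemma conj_box {i : ℕ} (hi : i ∈ Agt) :
    ∀ L : List Fml, ProvC Agt (gpermAx Agt)
      (impF (conjF (L.map (.cstit i))) (.cstit i (conjF L)))
  | [] => by
      have h0 : ProvC Agt (gpermAx Agt) (conjF []) :=
        ProvC.taut (by
          intro v hn ha
          rw [conjF_val v hn ha]
          simp)
      refine pc1 ?_ (ProvC.nec hi h0)
      intro v hn ha
      simp only [val_impF v hn ha]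
      tauto
  | [φ] => impSelf _
  | φ :: ψ :: l => by
      have ih := conj_box hi (ψ :: l)
      have hba := box_and hi φ (conjF (ψ :: l))
      have e1 : (φ :: ψ :: l).map (.cstit i) =
          Fml.cstit i φ :: (ψ :: l).map (.cstit i) := rfl
      have e2 : conjF (Fml.cstit i φ :: (ψ :: l).map (.cstit i)) =
          .and (.cstit i φ) (conjF ((ψ :: l).map (.cstit i))) := rfl
      have e3 : conjF (φ :: ψ :: l) = .and φ (conjF (ψ :: l)) := rfl
      rw [e1, e2, e3]
      refine pc2 ?_ ih hba
      intro v hn ha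
      simp only [val_impF v hn ha, ha]
      tauto

lemma conjF_imp {L : List Fml} {ψ : Fml} (hψ : ψ ∈ L) :
    ProvC Agt (gpermAx Agt) (impF (conjF L) ψ) :=
  ProvC.taut (by
    intro v hn ha
    rw [val_impF v hn ha, conjF_val v hn ha]
    intro h
    exact h ψ hψ)

lemma imp_conj {A : Fml} :
    ∀ L : List Fml, (∀ ψ ∈ L, ProvC Agt (gpermAx Agt) (impF A ψ)) →
      ProvC Agt (gpermAx Agt) (impF A (conjF L))
  | [] => fun _ => ProvC.taut (by
      intro v hn ha
      rw [val_impF v hn ha, conjF_val v hn ha]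
      simp)
  | [φ] => fun h => h φ (by simp)
  | φ :: ψ :: l => fun h => by
      have ih := imp_conj (ψ :: l) (fun χ hχ => h χ (List.mem_cons_of_mem _ hχ))
      have h1 := h φ (List.mem_cons_self)
      have e3 : conjF (φ :: ψ :: l) = .and φ (conjF (ψ :: l)) := rfl
      rw [e3]
      refine pc2 ?_ h1 ih
      intro v hn ha
      simp only [val_impF v hn ha, ha]
      tauto

lemma pos_mono {i : ℕ} (hi : i ∈ Agt) {φ ψ : Fml}
    (h : ProvC Agt (gpermAx Agt) (impF φ ψ)) :
    ProvC Agt (gpermAx Agt) (impF (posF i φ) (posF i ψ)) :=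
  contraP (kmp hi (contraP h))

/-- `⊢ φ → ⟨i⟩φ` (dual of T). -/
lemma tDual {i : ℕ} (hi : i ∈ Agt) (φ : Fml) :
    ProvC Agt (gpermAx Agt) (impF φ (posF i φ)) := by
  have h := axT hi (.neg φ)
  refine pc1 ?_ h
  intro v hn ha
  simp only [posF, val_impF v hn ha, hn]
  tauto

/-- `⊢ φ → [i]⟨i⟩φ` (the B schema). -/
lemma axB {i : ℕ} (hi : i ∈ Agt) (φ : Fml) :
    ProvC Agt (gpermAx Agt) (impF φ (.cstit i (posF i φ))) :=
  impTrans (tDual hi φ) (ax5 hi φ)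


/-! ### Consistent and maximal consistent sets -/

/-- Consistency of a set of formulas w.r.t. the `gpermAx` axiomatics. -/
def ConS (Agt : Set ℕ) (S : Set Fml) : Prop :=
  ∀ L : List Fml, (∀ ψ ∈ L, ψ ∈ S) → ¬ ProvC Agt (gpermAx Agt) (.neg (conjF L))

/-- Maximal consistent sets. -/
def MCSet (Agt : Set ℕ) (S : Set Fml) : Prop :=
  ConS Agt S ∧ ∀ φ : Fml, φ ∈ S ∨ Fml.neg φ ∈ S

namespace MCSet

variable {S : Set Fml} (h : MCSet Agt S)

include h

lemma not_both {φ : Fml} (h1 : φ ∈ S) (h2 : Fml.neg φ ∈ S) : False := by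
  refine h.1 [φ, .neg φ] ?_ ?_
  · intro ψ hψ
    simp only [List.mem_cons, List.not_mem_nil, or_false] at hψ
    rcases hψ with rfl | rfl <;> assumption
  · exact ProvC.taut (by
      intro v hn ha
      have e : conjF [φ, .neg φ] = .and φ (.neg φ) := rfl
      rw [hn, e, ha, hn]
      tauto)

lemma mem_prov {φ : Fml} (hp : ProvC Agt (gpermAx Agt) φ) : φ ∈ S := by
  rcases h.2 φ with h1 | h1
  · exact h1
  · exfalso
    refine h.1 [.neg φ] (by simpa using h1) ?_
    have e : conjF [Fml.neg φ] = .neg φ := rfl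
    rw [e]
    refine pc1 ?_ hp
    intro v hn ha
    rw [val_impF v hn ha, hn, hn]
    tauto

lemma mem_mp {φ ψ : Fml} (h1 : impF φ ψ ∈ S) (h2 : φ ∈ S) : ψ ∈ S := by
  rcases h.2 ψ with h3 | h3
  · exact h3
  · exfalso
    refine h.1 [impF φ ψ, φ, .neg ψ] ?_ ?_
    · intro χ hχ
      simp only [List.mem_cons, List.not_mem_nil, or_false] at hχ
      rcases hχ with rfl | rfl | rfl <;> assumption
    · exact ProvC.taut (by
        intro v hn ha
        have e : conjF [impF φ ψ, φ, .neg ψ] =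
            .and (impF φ ψ) (.and φ (.neg ψ)) := rfl
        rw [hn, e, ha, ha, hn, val_impF v hn ha]
        tauto)

lemma mem_imp {φ ψ : Fml} (hp : ProvC Agt (gpermAx Agt) (impF φ ψ))
    (h2 : φ ∈ S) : ψ ∈ S :=
  h.mem_mp (h.mem_prov hp) h2

lemma neg_mem_iff {φ : Fml} : Fml.neg φ ∈ S ↔ φ ∉ S := by
  constructor
  · intro h1 h2
    exact h.not_both h2 h1
  · intro h1
    rcases h.2 φ with h2 | h2
    · exact absurd h2 h1
    · exact h2

lemma mem_of_not_neg {φ : Fml} (h1 : Fml.neg φ ∉ S) : φ ∈ S := by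
  rcases h.2 φ with h2 | h2
  · exact h2
  · exact absurd h2 h1

lemma conj_mem : ∀ L : List Fml, (∀ ψ ∈ L, ψ ∈ S) → conjF L ∈ S
  | [] => fun _ => h.mem_prov (ProvC.taut (by
      intro v hn ha
      rw [conjF_val v hn ha]
      simp))
  | [φ] => fun hm => hm φ (by simp)
  | φ :: ψ :: l => fun hm => by
      have ih := conj_mem (ψ :: l) (fun χ hχ => hm χ (List.mem_cons_of_mem _ hχ))
      have h1 := hm φ (List.mem_cons_self)
      have e : conjF (φ :: ψ :: l) = .and φ (conjF (ψ :: l)) := rfl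
      rw [e]
      have t : ProvC Agt (gpermAx Agt)
          (impF φ (impF (conjF (ψ :: l)) (.and φ (conjF (ψ :: l))))) :=
        ProvC.taut (by
          intro v hn ha
          simp only [val_impF v hn ha, ha]
          tauto)
      exact h.mem_mp (h.mem_imp t h1) ih

end MCSet

/-- The union of a nonempty chain of consistent sets is consistent. -/
lemma con_sUnion {c : Set (Set Fml)} (hc : IsChain (· ⊆ ·) c)
    (hne : c.Nonempty) (hcon : ∀ T ∈ c, ConS Agt T) : ConS Agt (⋃₀ c) := by
  intro L hL
  -- find a single member of the chain containing all of `L`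
  have key : ∃ T ∈ c, ∀ ψ ∈ L, ψ ∈ T := by
    clear hcon
    induction L with
    | nil => exact ⟨hne.choose, hne.choose_spec, by simp⟩
    | cons φ l ih =>
        obtain ⟨T, hT, hTl⟩ := ih (fun ψ hψ => hL ψ (List.mem_cons_of_mem _ hψ))
        obtain ⟨U, hU, hφU⟩ := hL φ (List.mem_cons_self)
        rcases hc.total hT hU with hTU | hUT
        · exact ⟨U, hU, fun ψ hψ => by
            rcases List.mem_cons.1 hψ with rfl | hψ
            · exact hφU
            · exact hTU (hTl ψ hψ)⟩
        · exact ⟨T, hT, fun ψ hψ => by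
            rcases List.mem_cons.1 hψ with rfl | hψ
            · exact hUT hφU
            · exact hTl ψ hψ⟩
  obtain ⟨T, hT, hTL⟩ := key
  exact hcon T hT L hTL

/-- Lindenbaum's lemma. -/
lemma lindenbaum {S : Set Fml} (hS : ConS Agt S) :
    ∃ M : Set Fml, S ⊆ M ∧ MCSet Agt M := by
  obtain ⟨M, hSM, hMmem, hMmax⟩ :=
    zorn_subset_nonempty {T : Set Fml | ConS Agt T}
      (fun c hc hchain hne =>
        ⟨⋃₀ c, con_sUnion hchain hne (fun T hT => hc hT),
          fun T hT => Set.subset_sUnion_of_mem hT⟩) S hS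
  refine ⟨M, hSM, hMmem, ?_⟩
  intro φ
  by_contra hcon
  push_neg at hcon
  obtain ⟨hφ, hnφ⟩ := hcon
  -- both M ∪ {φ} and M ∪ {¬φ} are inconsistent
  have h1 : ¬ ConS Agt (insert φ M) := by
    intro hcon1
    have := hMmax hcon1 (Set.subset_insert _ _)
    exact hφ (this (Set.mem_insert φ M))
  have h2 : ¬ ConS Agt (insert (Fml.neg φ) M) := by
    intro hcon2
    have := hMmax hcon2 (Set.subset_insert _ _)
    exact hnφ (this (Set.mem_insert _ M))
  simp only [ConS, not_forall] at h1 h2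
  obtain ⟨L1, hL1, hp1⟩ := h1
  obtain ⟨L2, hL2, hp2⟩ := h2
  rw [not_not] at hp1 hp2
  set L1' := L1.filter (fun ψ => ψ ≠ φ) with hL1'def
  set L2' := L2.filter (fun ψ => ψ ≠ Fml.neg φ) with hL2'def
  refine hMmem (L1' ++ L2') ?_ ?_
  · intro ψ hψ
    rcases List.mem_append.1 hψ with hψ | hψ
    · obtain ⟨hψ1, hψ2⟩ := List.mem_filter.1 hψ
      rcases hL1 ψ hψ1 with rfl | hψ3
      · simp at hψ2
      · exact hψ3
    · obtain ⟨hψ1, hψ2⟩ := List.mem_filter.1 hψ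
      rcases hL2 ψ hψ1 with rfl | hψ3
      · simp at hψ2
      · exact hψ3
  · refine pc2 ?_ hp1 hp2
    intro v hn ha
    simp only [val_impF v hn ha, hn, conjF_val v hn ha]
    intro hc1 hc2 hall
    by_cases hvφ : v φ
    · apply hc1
      intro ψ hψ
      by_cases he : ψ = φ
      · subst he; exact hvφ
      · exact hall ψ (List.mem_append.2 (Or.inl
          (List.mem_filter.2 ⟨hψ, by simpa using he⟩)))
    · apply hc2
      intro ψ hψ
      by_cases he : ψ = Fml.neg φ
      · subst he; rw [hn]; exact hvφ
      · exact hall ψ (List.mem_append.2 (Or.inr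
          (List.mem_filter.2 ⟨hψ, by simpa using he⟩)))


/-! ### The canonical model -/

/-- The canonical relation for agent `i`. -/
def canRel (i : ℕ) (w v : Set Fml) : Prop :=
  ∀ φ : Fml, Fml.cstit i φ ∈ w → φ ∈ v

lemma canRel_refl {i : ℕ} (hi : i ∈ Agt) {w : Set Fml} (hw : MCSet Agt w) :
    canRel i w w :=
  fun φ h1 => hw.mem_imp (axT hi φ) h1

lemma dneg_box {i : ℕ} (hi : i ∈ Agt) (φ : Fml) :
    ProvC Agt (gpermAx Agt)
      (impF (.cstit i φ) (.cstit i (.neg (.neg φ)))) :=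
  kmp hi (ProvC.taut (by
    intro v hn ha
    rw [val_impF v hn ha, hn, hn]
    tauto))

lemma canRel_symm {i : ℕ} (hi : i ∈ Agt) {w v : Set Fml} (hw : MCSet Agt w)
    (hv : MCSet Agt v) (hr : canRel i w v) : canRel i v w := by
  intro φ h1
  by_contra hφ
  have hnφ : Fml.neg φ ∈ w := hw.neg_mem_iff.2 hφ
  have h2 : Fml.cstit i (posF i (.neg φ)) ∈ w := hw.mem_imp (axB hi (.neg φ)) hnφ
  have h3 : posF i (.neg φ) ∈ v := hr _ h2
  have h4 : Fml.cstit i (.neg (.neg φ)) ∈ v := hv.mem_imp (dneg_box hi φ) h1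
  exact hv.not_both h4 h3

lemma canRel_euclid {i : ℕ} (hi : i ∈ Agt) {w v u : Set Fml} (hw : MCSet Agt w)
    (hv : MCSet Agt v) (hu : MCSet Agt u) (hr1 : canRel i w v)
    (hr2 : canRel i w u) : canRel i v u := by
  intro φ h1
  by_contra hφ
  have hb : Fml.cstit i φ ∉ w := fun hc => hφ (hr2 φ hc)
  have hnb : Fml.neg (.cstit i φ) ∈ w := hw.neg_mem_iff.2 hb
  have hpos : posF i (.neg φ) ∈ w := by
    refine hw.mem_imp (contraP (kmp hi (ProvC.taut ?_))) hnb
    intro v' hn ha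
    rw [val_impF v' hn ha, hn, hn]
    tauto
  have h5 : Fml.cstit i (posF i (.neg φ)) ∈ w := hw.mem_imp (ax5 hi (.neg φ)) hpos
  have h3 : posF i (.neg φ) ∈ v := hr1 _ h5
  have h4 : Fml.cstit i (.neg (.neg φ)) ∈ v := hv.mem_imp (dneg_box hi φ) h1
  exact hv.not_both h4 h3

lemma canRel_trans {i : ℕ} (hi : i ∈ Agt) {w v u : Set Fml} (hw : MCSet Agt w)
    (hv : MCSet Agt v) (hu : MCSet Agt u) (hr1 : canRel i w v)
    (hr2 : canRel i v u) : canRel i w u :=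
  canRel_euclid hi hv hw hu (canRel_symm hi hw hv hr1) hr2

/-- Existence lemma: non-boxed formulas have successor witnesses. -/
lemma exists_succ {i : ℕ} (hi : i ∈ Agt) {w : Set Fml} (hw : MCSet Agt w)
    {φ : Fml} (hnb : Fml.cstit i φ ∉ w) :
    ∃ v : Set Fml, MCSet Agt v ∧ canRel i w v ∧ φ ∉ v := by
  set Sig : Set Fml := {ψ | Fml.cstit i ψ ∈ w} ∪ {.neg φ} with hSig
  have hcon : ConS Agt Sig := by
    intro L hL hP
    set L' := L.filter (fun ψ => ψ ≠ Fml.neg φ) with hL'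
    have h1 : ProvC Agt (gpermAx Agt) (impF (conjF L') φ) := by
      refine pc1 ?_ hP
      intro v hn ha
      simp only [val_impF v hn ha, hn, conjF_val v hn ha]
      intro hcL hcL'
      by_contra hvφ
      apply hcL
      intro ψ hψ
      by_cases he : ψ = Fml.neg φ
      · subst he; rw [hn]; exact hvφ
      · exact hcL' ψ (List.mem_filter.2 ⟨hψ, by simpa using he⟩)
    have h2 : ProvC Agt (gpermAx Agt)
        (impF (conjF (L'.map (.cstit i))) (.cstit i φ)) :=
      impTrans (conj_box hi L') (kmp hi h1)
    have h3 : conjF (L'.map (.cstit i)) ∈ w := by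
      refine hw.conj_mem _ ?_
      intro χ hχ
      obtain ⟨ψ, hψ, rfl⟩ := List.mem_map.1 hχ
      obtain ⟨hψ1, hψ2⟩ := List.mem_filter.1 hψ
      rcases hL ψ hψ1 with h4 | h4
      · exact h4
      · simp only [Set.mem_singleton_iff] at h4
        exact absurd h4 (by simpa using hψ2)
    exact hnb (hw.mem_imp h2 h3)
  obtain ⟨v, hSv, hv⟩ := lindenbaum hcon
  refine ⟨v, hv, ?_, ?_⟩
  · intro ψ hψ
    exact hSv (Or.inl hψ)
  · exact hv.neg_mem_iff.1 (hSv (Or.inr rfl))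


/-- The first projection of `⟨i⟩χ`. -/
def posIdx : Fml → ℕ
  | .neg (.cstit i _) => i
  | _ => 0

/-- The second projection of `⟨i⟩χ`. -/
def posBody : Fml → Fml
  | .neg (.cstit _ (.neg χ)) => χ
  | ψ => ψ

@[simp] lemma posIdx_posF (i : ℕ) (χ : Fml) : posIdx (posF i χ) = i := rfl

@[simp] lemma posBody_posF (i : ℕ) (χ : Fml) : posBody (posF i χ) = χ := rfl

lemma fold_max_mem (A : Set ℕ) :
    ∀ L : List ℕ, L ≠ [] → (∀ i ∈ L, i ∈ A) →
      L.foldr max 0 ∈ A ∧ ∀ i ∈ L, i ≤ L.foldr max 0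
  | [], h, _ => absurd rfl h
  | [i], _, hA => by
      refine ⟨by simpa using hA i (by simp), ?_⟩
      simp
  | i :: j :: L, _, hA => by
      obtain ⟨ih1, ih2⟩ := fold_max_mem A (j :: L) (by simp)
        (fun x hx => hA x (List.mem_cons_of_mem _ hx))
      have hfold : (i :: j :: L).foldr max 0 = max i ((j :: L).foldr max 0) := rfl
      constructor
      · rw [hfold]
        rcases Nat.le_total i ((j :: L).foldr max 0) with hle | hle
        · rwa [Nat.max_eq_right hle]
        · rw [Nat.max_eq_left hle]
          exact hA i (by simp)
      · intro x hx
        rw [hfold]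
        rcases List.mem_cons.1 hx with rfl | hx
        · exact Nat.le_max_left _ _
        · exact le_trans (ih2 x hx) (Nat.le_max_right _ _)

/-- If `χ ∈ v` and `canRel i x v` then `⟨i⟩χ ∈ x`. -/
lemma pos_back {i : ℕ} (hi : i ∈ Agt) {x v : Set Fml} (hx : MCSet Agt x)
    (hv : MCSet Agt v) (hr : canRel i x v) {χ : Fml} (hχ : χ ∈ v) :
    posF i χ ∈ x := by
  by_contra hnp
  have h1 : Fml.neg (posF i χ) ∈ x := hx.neg_mem_iff.2 hnp
  have h2 : Fml.cstit i (.neg χ) ∈ x := by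
    refine hx.mem_imp (ProvC.taut ?_) h1
    intro v' hn ha
    rw [val_impF v' hn ha]
    simp only [posF, hn]
    tauto
  exact hv.not_both hχ (hr _ h2)

/-- The canonical model has the general permutation property. -/
lemma canonical_gperm (hAgt : InitSeg Agt) {l m n : ℕ} (hl : l ∈ Agt)
    (hm : m ∈ Agt) (hn : n ∈ Agt) {w x v : Set Fml} (hw : MCSet Agt w)
    (hx : MCSet Agt x) (hv : MCSet Agt v) (hwx : canRel l w x)
    (hxv : canRel m x v) :
    ∃ u : Set Fml, MCSet Agt u ∧ canRel n w u ∧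
      ∀ i ∈ Agt, i ≠ n → canRel i u v := by
  classical
  set Sig : Set Fml := {ψ | Fml.cstit n ψ ∈ w} ∪
    {ψ | ∃ i ∈ Agt, i ≠ n ∧ ∃ χ ∈ v, ψ = posF i χ} with hSig
  have hcon : ConS Agt Sig := by
    intro L hL hP
    set L1 := L.filter (fun ψ => decide (Fml.cstit n ψ ∈ w)) with hL1def
    set L2 := L.filter (fun ψ => decide (Fml.cstit n ψ ∉ w)) with hL2def
    have hsplit : ∀ ψ ∈ L, ψ ∈ L1 ∨ ψ ∈ L2 := by
      intro ψ hψ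
      by_cases hc : Fml.cstit n ψ ∈ w
      · exact Or.inl (List.mem_filter.2 ⟨hψ, by simpa using hc⟩)
      · exact Or.inr (List.mem_filter.2 ⟨hψ, by simpa using hc⟩)
    have hL1w : ∀ ψ ∈ L1, Fml.cstit n ψ ∈ w := by
      intro ψ hψ
      have := (List.mem_filter.1 hψ).2
      simpa using this
    have hL2B : ∀ ψ ∈ L2, posIdx ψ ∈ Agt ∧ posIdx ψ ≠ n ∧ posBody ψ ∈ v ∧
        ψ = posF (posIdx ψ) (posBody ψ) := by
      intro ψ hψ
      obtain ⟨hψL, hψ2⟩ := List.mem_filter.1 hψ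
      have hnw : Fml.cstit n ψ ∉ w := by simpa using hψ2
      rcases hL ψ hψL with hA | hB
      · exact absurd hA hnw
      · obtain ⟨i, hi, hin, χ, hχ, rfl⟩ := hB
        simpa using ⟨hi, hin, hχ⟩
    -- the bound k
    set is := L2.map posIdx with hisdef
    set k := (n :: is).foldr max 0 with hkdef
    obtain ⟨hkA, hkb⟩ := fold_max_mem Agt (n :: is) (by simp)
      (by
        intro i hi
        rcases List.mem_cons.1 hi with rfl | hi
        · exact hn
        · obtain ⟨ψ, hψ, rfl⟩ := List.mem_map.1 hi
          exact (hL2B ψ hψ).1)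
    have hkAgt : ∀ i ≤ k, i ∈ Agt := fun i hik => hAgt k hkA i hik
    -- the conjunction χ*
    set χs := L2.map posBody with hχsdef
    set χstar := conjF χs with hχstardef
    have hχstarv : χstar ∈ v := hv.conj_mem _ (by
      intro χ hχ
      obtain ⟨ψ, hψ, rfl⟩ := List.mem_map.1 hχ
      exact (hL2B ψ hψ).2.2.1)
    -- ⟨l⟩⟨m⟩χ* ∈ w
    have hpos1 : posF m χstar ∈ x := pos_back hm hx hv hxv hχstarv
    have hpos2 : posF l (posF m χstar) ∈ w := pos_back hl hw hx hwx hpos1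
    -- the GPerm_k axiom
    have haxm : ProvC Agt (gpermAx Agt) (gpermFml k l m n χstar) :=
      ProvC.axm (Or.inr ⟨k, hkAgt, l, hl, m, hm, n, hn, χstar, rfl⟩)
    set ΘL := ((List.range (k+1)).filter (fun i => i != n)).map
      (fun i => posF i χstar) with hΘLdef
    have hposΘ : posF n (conjF ΘL) ∈ w := hw.mem_mp (hw.mem_prov haxm) hpos2
    -- [n](⋀L1) ∈ w
    have hboxL1 : Fml.cstit n (conjF L1) ∈ w := by
      refine hw.mem_imp (conj_box hn L1) (hw.conj_mem _ ?_)
      intro χ hχ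
      obtain ⟨ψ, hψ, rfl⟩ := List.mem_map.1 hχ
      exact hL1w ψ hψ
    -- ⊢ ⋀L1 → ¬⋀L2
    have himp : ProvC Agt (gpermAx Agt)
        (impF (conjF L1) (.neg (conjF L2))) := by
      refine pc1 ?_ hP
      intro v' hn' ha'
      simp only [val_impF v' hn' ha', hn', conjF_val v' hn' ha']
      intro hcL h1 h2
      apply hcL
      intro ψ hψ
      rcases hsplit ψ hψ with hψ1 | hψ2
      · exact h1 ψ hψ1
      · exact h2 ψ hψ2
    -- ⊢ Θ → ⋀L2
    have hΘ2 : ProvC Agt (gpermAx Agt) (impF (conjF ΘL) (conjF L2)) := by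
      refine imp_conj L2 ?_
      intro ψ hψ
      obtain ⟨hiA, hin, hχv, hψeq⟩ := hL2B ψ hψ
      have hik : posIdx ψ ≤ k := by
        refine le_trans ?_ (le_refl k)
        exact hkb (posIdx ψ) (List.mem_cons_of_mem _
          (List.mem_map.2 ⟨ψ, hψ, rfl⟩))
      have hmemΘ : posF (posIdx ψ) χstar ∈ ΘL := by
        refine List.mem_map.2 ⟨posIdx ψ, List.mem_filter.2 ⟨?_, ?_⟩, rfl⟩
        · exact List.mem_range.2 (Nat.lt_succ_of_le hik)
        · simpa using hin
      have h1 : ProvC Agt (gpermAx Agt) (impF (conjF ΘL)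
          (posF (posIdx ψ) χstar)) := conjF_imp hmemΘ
      have h2 : ProvC Agt (gpermAx Agt) (impF (posF (posIdx ψ) χstar)
          (posF (posIdx ψ) (posBody ψ))) := by
        refine pos_mono hiA (conjF_imp ?_)
        exact List.mem_map.2 ⟨ψ, hψ, rfl⟩
      rw [hψeq] at *
      exact impTrans h1 h2
    -- combine into a contradiction
    have hchain : ProvC Agt (gpermAx Agt)
        (impF (conjF L1) (.neg (conjF ΘL))) := by
      refine pc2 ?_ himp hΘ2
      intro v' hn' ha'
      simp only [val_impF v' hn' ha', hn']
      tauto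
    have hfinal : Fml.cstit n (.neg (conjF ΘL)) ∈ w :=
      hw.mem_imp (kmp hn hchain) hboxL1
    exact hw.not_both hfinal hposΘ
  obtain ⟨u, hSu, hu⟩ := lindenbaum hcon
  refine ⟨u, hu, ?_, ?_⟩
  · intro ψ hψ
    exact hSu (Or.inl hψ)
  · intro i hi hin φ hφ
    by_contra hφv
    have h1 : Fml.neg φ ∈ v := hv.neg_mem_iff.2 hφv
    have h2 : posF i (.neg φ) ∈ u :=
      hSu (Or.inr ⟨i, hi, hin, .neg φ, h1, rfl⟩)
    have h3 : Fml.cstit i (.neg (.neg φ)) ∈ u := hu.mem_imp (dneg_box hi φ) hφ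
    exact hu.not_both h3 h2


/-- The trivial one-world Kripke model. -/
def trivModel (Agt : Set ℕ) : KModel Agt where
  W := Unit
  neW := ⟨()⟩
  R := fun _ _ _ => True
  equiv := fun _ _ => ⟨fun _ => trivial, fun _ => trivial, fun _ _ => trivial⟩
  V := fun _ => ∅

lemma trivModel_gperm : GenPerm (trivModel Agt) :=
  fun _ v _ _ _ _ _ _ _ => ⟨v, trivial, fun _ _ _ => trivial⟩

/-- The empty set is consistent. -/
lemma empty_con : ConS Agt (∅ : Set Fml) := by
  intro L hL hP
  cases L with
  | cons φ l => exact hL φ (List.mem_cons_self)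
  | nil =>
      have hval := gperm_soundness _ hP (trivModel Agt) trivModel_gperm ()
      exact (ktruth_neg _ _ _).1 hval ((ktruth_conjF _ _ _).2 (by simp))

/-- The canonical Kripke model. -/
noncomputable def canModel (Agt : Set ℕ) : KModel Agt where
  W := {S : Set Fml // MCSet Agt S}
  neW := by
    obtain ⟨M, _, hM⟩ := lindenbaum (empty_con (Agt := Agt))
    exact ⟨⟨M, hM⟩⟩
  R := fun i w v => canRel i w.1 v.1
  equiv := fun i hi =>
    ⟨fun w => canRel_refl hi w.2,
     fun {w v} h => canRel_symm hi w.2 v.2 h,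
     fun {a b c} h1 h2 => canRel_trans hi a.2 b.2 c.2 h1 h2⟩
  V := fun p => {w | Fml.atm p ∈ w.1}

lemma canModel_gperm (hAgt : InitSeg Agt) : GenPerm (canModel Agt) := by
  rintro w v l hl m hm n hn ⟨x, hwx, hxv⟩
  obtain ⟨u, hu, hnu, hiu⟩ :=
    canonical_gperm hAgt hl hm hn w.2 x.2 v.2 hwx hxv
  exact ⟨⟨u, hu⟩, hnu, fun i hi hin => hiu i hi hin⟩

lemma iff_elim1 {A B : Fml} (h : ProvC Agt (gpermAx Agt) (iffF A B)) :
    ProvC Agt (gpermAx Agt) (impF A B) := by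
  refine pc1 ?_ h
  intro v hn ha
  rw [val_impF v hn ha, val_iffF v hn ha, val_impF v hn ha]
  tauto

lemma iff_elim2 {A B : Fml} (h : ProvC Agt (gpermAx Agt) (iffF A B)) :
    ProvC Agt (gpermAx Agt) (impF B A) := by
  refine pc1 ?_ h
  intro v hn ha
  rw [val_impF v hn ha, val_iffF v hn ha, val_impF v hn ha]
  tauto

/-- The truth lemma for the canonical model. -/
lemma truth_lemma (hAgt : InitSeg Agt) (h0 : 0 ∈ Agt) (h1 : 1 ∈ Agt)
    (φ : Fml) :
    NoDstit φ → AgentsIn Agt φ → ∀ w : (canModel Agt).W,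
      ktruth (canModel Agt) φ w ↔ φ ∈ w.1 := by
  induction φ with
  | atm p => exact fun _ _ w => Iff.rfl
  | neg ψ ih =>
      intro hnd hag w
      rw [ktruth_neg, ih hnd hag w, w.2.neg_mem_iff]
  | and ψ χ ih1 ih2 =>
      intro hnd hag w
      rw [ktruth_and, ih1 hnd.1 hag.1 w, ih2 hnd.2 hag.2 w]
      constructor
      · rintro ⟨ha1, ha2⟩
        have t : ProvC Agt (gpermAx Agt) (impF ψ (impF χ (.and ψ χ))) :=
          ProvC.taut (by
            intro v hn ha
            simp only [val_impF v hn ha, ha]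
            tauto)
        exact w.2.mem_mp (w.2.mem_imp t ha1) ha2
      · intro hmem
        constructor
        · exact w.2.mem_imp (ProvC.taut (by
            intro v hn ha
            simp only [val_impF v hn ha, ha]
            tauto)) hmem
        · exact w.2.mem_imp (ProvC.taut (by
            intro v hn ha
            simp only [val_impF v hn ha, ha]
            tauto)) hmem
  | cstit i ψ ih =>
      intro hnd hag w
      obtain ⟨hi, hagψ⟩ := hag
      constructor
      · intro hk
        by_contra hmem
        obtain ⟨v, hv, hr, hψv⟩ := exists_succ hi w.2 hmem
        exact hψv ((ih hnd hagψ ⟨v, hv⟩).1 (hk ⟨v, hv⟩ hr))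
      · intro hmem v hr
        exact (ih hnd hagψ v).2 (hr ψ hmem)
  | dstit i ψ ih => exact fun hnd => absurd hnd not_false
  | box ψ ih =>
      intro hnd hag w
      constructor
      · intro hk
        by_contra hmem
        have hmem2 : Fml.cstit 1 (.cstit 0 ψ) ∉ w.1 := fun hc =>
          hmem (w.2.mem_imp (iff_elim2 (axDef ψ)) hc)
        obtain ⟨x, hx, hr1, hc0⟩ := exists_succ h1 w.2 hmem2
        obtain ⟨u, hu, hr0, hψu⟩ := exists_succ h0 hx hc0
        refine hψu ((ih hnd hag ⟨u, hu⟩).1 ?_)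
        exact hk ⟨u, hu⟩ ⟨⟨x, hx⟩, hr1, hr0⟩
      · intro hmem
        have hmem2 : Fml.cstit 1 (.cstit 0 ψ) ∈ w.1 :=
          w.2.mem_imp (iff_elim1 (axDef ψ)) hmem
        rintro u ⟨x, hr1, hr0⟩
        exact (ih hnd hag u).2 (hr0 ψ (hr1 _ hmem2))

end KripkeCompleteness



/-- A formula of `L_CSTIT` is valid in all Kripke models that
satisfy the general permutation property (with each `R i` an equivalence
relation) iff it is provable from the axiom schemas `S5(i)` for every agent
`i`, `Def(□) : □φ ↔ [1][0]φ`, and `(GPerm_k)`, by the rules of modus ponens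
and `[i]`-necessitation; this holds both when `Agt` is finite with
`|Agt| ≥ 2` and when `Agt = ℕ`. -/
theorem kripke_completeness (Agt : Set ℕ) (hAgt : InitSeg Agt)
    (hcase : (Agt.Finite ∧ 1 ∈ Agt) ∨ Agt = Set.univ)
    (φ : Fml) (hφ : NoDstit φ) (hφA : AgentsIn Agt φ) :
    validK Agt φ ↔ ProvC Agt (gpermAx Agt) φ := by
  have h1 : (1 : ℕ) ∈ Agt := by
    rcases hcase with ⟨_, h⟩ | rfl
    · exact h
    · trivial
  have h0 : (0 : ℕ) ∈ Agt := hAgt 1 h1 0 (by norm_num)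
  constructor
  · intro hval
    by_contra hnp
    have hcon : ConS Agt {Fml.neg φ} := by
      intro L hL hP
      refine hnp (pc1 ?_ hP)
      intro v hn ha
      rw [val_impF v hn ha, hn, conjF_val v hn ha]
      intro hcL
      by_contra hvφ
      apply hcL
      intro ψ hψ
      have := hL ψ hψ
      simp only [Set.mem_singleton_iff] at this
      subst this
      rw [hn]
      exact hvφ
    obtain ⟨w, hsub, hw⟩ := lindenbaum hcon
    have hktruth := hval (canModel Agt) (canModel_gperm hAgt) ⟨w, hw⟩
    have hmem : φ ∈ w := (truth_lemma hAgt h0 h1 φ hφ hφA ⟨w, hw⟩).1 hktruth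
    exact hw.not_both hmem (hsub rfl)
  · intro hp
    exact gperm_soundness φ hp

end STIT
end

section
/- If a formula φ of L_CSTIT is satisfiable in some Kripke model in which each R_i is an equivalence relation and R satisfies the general permutation property, then φ is satisfiable in such a Kripke model ⟨W',R',V'⟩ with |W'| ≤ 2^{‖φ‖}, where ‖φ‖ is the length of φ. -/
/-! Common infrastructure for STIT logic (Chellas STIT, deliberative STIT,
historic necessity), following Balbiani, Herzig & Troquard,
"Alternative axiomatics and complexity of deliberative STIT theories". -/

namespace STIT

/-! ### Auxiliary material for the small model property -/

open Classical in
lemma smp_mem_sf_self (φ : Fml) : φ ∈ sf φ := by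
  cases φ <;> simp [sf]

lemma smp_sf_card_le_len (φ : Fml) : (sf φ).card ≤ len φ := by
  induction φ with
  | atm p => simp [sf, len]
  | neg ψ ih =>
      have := Finset.card_insert_le (Fml.neg ψ) (sf ψ)
      simp only [sf, len]; omega
  | and ψ χ ih1 ih2 =>
      have h1 := Finset.card_insert_le (Fml.and ψ χ) (sf ψ ∪ sf χ)
      have h2 := Finset.card_union_le (sf ψ) (sf χ)
      simp only [sf, len]; omega
  | cstit i ψ ih =>
      have := Finset.card_insert_le (Fml.cstit i ψ) (sf ψ)
      simp only [sf, len]; omega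
  | dstit i ψ ih =>
      have := Finset.card_insert_le (Fml.dstit i ψ) (sf ψ)
      simp only [sf, len]; omega
  | box ψ ih =>
      have := Finset.card_insert_le (Fml.box ψ) (sf ψ)
      simp only [sf, len]; omega

lemma smp_sf_sub : ∀ φ ψ : Fml, ψ ∈ sf φ → sf ψ ⊆ sf φ := by
  intro φ
  induction φ with
  | atm p =>
      intro ψ h
      simp only [sf, Finset.mem_singleton] at h
      subst h; exact subset_rfl
  | neg χ ih =>
      intro ψ h
      simp only [sf, Finset.mem_insert] at h
      rcases h with rfl | h
      · exact subset_rfl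
      · exact (ih ψ h).trans (Finset.subset_insert _ _)
  | and χ ρ ih1 ih2 =>
      intro ψ h
      simp only [sf, Finset.mem_insert, Finset.mem_union] at h
      rcases h with rfl | h | h
      · exact subset_rfl
      · exact (ih1 ψ h).trans ((Finset.subset_union_left).trans (Finset.subset_insert _ _))
      · exact (ih2 ψ h).trans ((Finset.subset_union_right).trans (Finset.subset_insert _ _))
  | cstit i χ ih =>
      intro ψ h
      simp only [sf, Finset.mem_insert] at h
      rcases h with rfl | h
      · exact subset_rfl
      · exact (ih ψ h).trans (Finset.subset_insert _ _)
  | dstit i χ ih =>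
      intro ψ h
      simp only [sf, Finset.mem_insert] at h
      rcases h with rfl | h
      · exact subset_rfl
      · exact (ih ψ h).trans (Finset.subset_insert _ _)
  | box χ ih =>
      intro ψ h
      simp only [sf, Finset.mem_insert] at h
      rcases h with rfl | h
      · exact subset_rfl
      · exact (ih ψ h).trans (Finset.subset_insert _ _)

lemma smp_noDstit_sf : ∀ φ ψ : Fml, ψ ∈ sf φ → NoDstit φ → NoDstit ψ := by
  intro φ
  induction φ with
  | atm p => intro ψ h hd; simp only [sf, Finset.mem_singleton] at h; subst h; exact hd
  | neg χ ih =>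
      intro ψ h hd
      simp only [sf, Finset.mem_insert] at h
      rcases h with rfl | h
      · exact hd
      · exact ih ψ h hd
  | and χ ρ ih1 ih2 =>
      intro ψ h hd
      simp only [sf, Finset.mem_insert, Finset.mem_union] at h
      rcases h with rfl | h | h
      · exact hd
      · exact ih1 ψ h hd.1
      · exact ih2 ψ h hd.2
  | cstit i χ ih =>
      intro ψ h hd
      simp only [sf, Finset.mem_insert] at h
      rcases h with rfl | h
      · exact hd
      · exact ih ψ h hd
  | dstit i χ ih => intro ψ h hd; exact absurd hd (by simp [NoDstit])
  | box χ ih =>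
      intro ψ h hd
      simp only [sf, Finset.mem_insert] at h
      rcases h with rfl | h
      · exact hd
      · exact ih ψ h hd

lemma smp_agentsIn_sf (A : Set ℕ) : ∀ φ ψ : Fml, ψ ∈ sf φ → AgentsIn A φ → AgentsIn A ψ := by
  intro φ
  induction φ with
  | atm p => intro ψ h hd; simp only [sf, Finset.mem_singleton] at h; subst h; exact hd
  | neg χ ih =>
      intro ψ h hd
      simp only [sf, Finset.mem_insert] at h
      rcases h with rfl | h
      · exact hd
      · exact ih ψ h hd
  | and χ ρ ih1 ih2 =>
      intro ψ h hd
      simp only [sf, Finset.mem_insert, Finset.mem_union] at h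
      rcases h with rfl | h | h
      · exact hd
      · exact ih1 ψ h hd.1
      · exact ih2 ψ h hd.2
  | cstit i χ ih =>
      intro ψ h hd
      simp only [sf, Finset.mem_insert] at h
      rcases h with rfl | h
      · exact hd
      · exact ih ψ h hd.2
  | dstit i χ ih =>
      intro ψ h hd
      simp only [sf, Finset.mem_insert] at h
      rcases h with rfl | h
      · exact hd
      · exact ih ψ h hd.2
  | box χ ih =>
      intro ψ h hd
      simp only [sf, Finset.mem_insert] at h
      rcases h with rfl | h
      · exact hd
      · exact ih ψ h hd

lemma smp_succ_le_four_pow (c : ℕ) : c + 1 ≤ 4 ^ c := by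
  induction c with
  | zero => simp
  | succ c ih =>
      have : 4 ^ (c + 1) = 4 * 4 ^ c := by ring
      have h4 : 4 * (c + 1) ≥ c + 2 := by omega
      calc c + 2 ≤ 4 * (c + 1) := by omega
        _ ≤ 4 * 4 ^ c := by omega
        _ = 4 ^ (c + 1) := by ring

lemma smp_cast_pow_two (n : ℕ) : ((2 ^ n : ℕ) : Cardinal) = (2 : Cardinal) ^ n := by
  push_cast
  rfl

/-! ### Positions (occurrences) in a formula -/

/-- The subformula of `φ` at position `p` (a path of directions). -/
def smp_subAt : Fml → List Bool → Option Fml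
  | ψ, [] => some ψ
  | .neg ψ, true :: p => smp_subAt ψ p
  | .and A _, false :: p => smp_subAt A p
  | .and _ B, true :: p => smp_subAt B p
  | .cstit _ ψ, true :: p => smp_subAt ψ p
  | .dstit _ ψ, true :: p => smp_subAt ψ p
  | .box ψ, true :: p => smp_subAt ψ p
  | _, _ => none

/-- The polarity of the position `p` in `φ`. -/
def smp_polAt : Fml → List Bool → Bool
  | _, [] => true
  | .neg ψ, true :: p => ! smp_polAt ψ p
  | .and A _, false :: p => smp_polAt A p
  | .and _ B, true :: p => smp_polAt B p
  | .cstit _ ψ, true :: p => smp_polAt ψ p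
  | .dstit _ ψ, true :: p => smp_polAt ψ p
  | .box ψ, true :: p => smp_polAt ψ p
  | _, _ => true

/-- The set of valid positions in `φ`. -/
def smp_posSet : Fml → Finset (List Bool)
  | .atm _ => {[]}
  | .neg ψ => insert [] ((smp_posSet ψ).image (List.cons true))
  | .and A B => insert []
      (((smp_posSet A).image (List.cons false)) ∪ ((smp_posSet B).image (List.cons true)))
  | .cstit _ ψ => insert [] ((smp_posSet ψ).image (List.cons true))
  | .dstit _ ψ => insert [] ((smp_posSet ψ).image (List.cons true))
  | .box ψ => insert [] ((smp_posSet ψ).image (List.cons true))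

/-- The number of cstit-occurrences in `φ`. -/
def smp_cOcc : Fml → ℕ
  | .atm _ => 0
  | .neg ψ => smp_cOcc ψ
  | .and A B => smp_cOcc A + smp_cOcc B
  | .cstit _ ψ => 1 + smp_cOcc ψ
  | .dstit _ ψ => smp_cOcc ψ
  | .box ψ => smp_cOcc ψ

lemma smp_nil_mem_posSet (φ : Fml) : [] ∈ smp_posSet φ := by
  cases φ <;> simp [smp_posSet]

lemma smp_subAt_nil (φ : Fml) : smp_subAt φ [] = some φ := by cases φ <;> rfl

lemma smp_mem_posSet_of_isSome :
    ∀ (φ : Fml) (p : List Bool), (smp_subAt φ p).isSome → p ∈ smp_posSet φ := by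
  intro φ
  induction φ with
  | atm a =>
      intro p hp
      cases p with
      | nil => simp [smp_posSet]
      | cons b q => simp [smp_subAt] at hp
  | neg ψ ih =>
      intro p hp
      cases p with
      | nil => exact smp_nil_mem_posSet _
      | cons b q =>
          cases b
          · simp [smp_subAt] at hp
          · simp only [smp_posSet, Finset.mem_insert, Finset.mem_image]
            exact Or.inr ⟨q, ih q hp, rfl⟩
  | and A B ihA ihB =>
      intro p hp
      cases p with
      | nil => exact smp_nil_mem_posSet _
      | cons b q =>
          cases b
          · simp only [smp_posSet, Finset.mem_insert, Finset.mem_union, Finset.mem_image]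
            exact Or.inr (Or.inl ⟨q, ihA q hp, rfl⟩)
          · simp only [smp_posSet, Finset.mem_insert, Finset.mem_union, Finset.mem_image]
            exact Or.inr (Or.inr ⟨q, ihB q hp, rfl⟩)
  | cstit i ψ ih =>
      intro p hp
      cases p with
      | nil => exact smp_nil_mem_posSet _
      | cons b q =>
          cases b
          · simp [smp_subAt] at hp
          · simp only [smp_posSet, Finset.mem_insert, Finset.mem_image]
            exact Or.inr ⟨q, ih q hp, rfl⟩
  | dstit i ψ ih =>
      intro p hp
      cases p with
      | nil => exact smp_nil_mem_posSet _
      | cons b q =>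
          cases b
          · simp [smp_subAt] at hp
          · simp only [smp_posSet, Finset.mem_insert, Finset.mem_image]
            exact Or.inr ⟨q, ih q hp, rfl⟩
  | box ψ ih =>
      intro p hp
      cases p with
      | nil => exact smp_nil_mem_posSet _
      | cons b q =>
          cases b
          · simp [smp_subAt] at hp
          · simp only [smp_posSet, Finset.mem_insert, Finset.mem_image]
            exact Or.inr ⟨q, ih q hp, rfl⟩

lemma smp_subAt_append :
    ∀ (φ : Fml) (p q : List Bool) (ψ : Fml), smp_subAt φ p = some ψ →
      smp_subAt φ (p ++ q) = smp_subAt ψ q := by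
  intro φ
  induction φ with
  | atm a =>
      intro p q ψ hp
      cases p with
      | nil => simp [smp_subAt_nil] at hp; subst hp; rfl
      | cons b r => simp [smp_subAt] at hp
  | neg χ ih =>
      intro p q ψ hp
      cases p with
      | nil => simp [smp_subAt_nil] at hp; subst hp; rfl
      | cons b r =>
          cases b
          · simp [smp_subAt] at hp
          · exact ih r q ψ hp
  | and A B ihA ihB =>
      intro p q ψ hp
      cases p with
      | nil => simp [smp_subAt_nil] at hp; subst hp; rfl
      | cons b r =>
          cases b
          · exact ihA r q ψ hp
          · exact ihB r q ψ hp
  | cstit i χ ih =>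
      intro p q ψ hp
      cases p with
      | nil => simp [smp_subAt_nil] at hp; subst hp; rfl
      | cons b r =>
          cases b
          · simp [smp_subAt] at hp
          · exact ih r q ψ hp
  | dstit i χ ih =>
      intro p q ψ hp
      cases p with
      | nil => simp [smp_subAt_nil] at hp; subst hp; rfl
      | cons b r =>
          cases b
          · simp [smp_subAt] at hp
          · exact ih r q ψ hp
  | box χ ih =>
      intro p q ψ hp
      cases p with
      | nil => simp [smp_subAt_nil] at hp; subst hp; rfl
      | cons b r =>
          cases b
          · simp [smp_subAt] at hp
          · exact ih r q ψ hp

lemma smp_polAt_nil (φ : Fml) : smp_polAt φ [] = true := by cases φ <;> rfl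

lemma smp_polAt_append :
    ∀ (φ : Fml) (p q : List Bool) (ψ : Fml), smp_subAt φ p = some ψ →
      smp_polAt φ (p ++ q) = (smp_polAt φ p == smp_polAt ψ q) := by
  intro φ
  induction φ with
  | atm a =>
      intro p q ψ hp
      cases p with
      | nil => simp [smp_subAt_nil] at hp; subst hp; simp [smp_polAt_nil]
      | cons b r => simp [smp_subAt] at hp
  | neg χ ih =>
      intro p q ψ hp
      cases p with
      | nil => simp [smp_subAt_nil] at hp; subst hp; simp [smp_polAt_nil]
      | cons b r =>
          cases b
          · simp [smp_subAt] at hp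
          · show (! smp_polAt χ (r ++ q)) = ((! smp_polAt χ r) == smp_polAt ψ q)
            rw [ih r q ψ hp]
            cases smp_polAt χ r <;> cases smp_polAt ψ q <;> rfl
  | and A B ihA ihB =>
      intro p q ψ hp
      cases p with
      | nil => simp [smp_subAt_nil] at hp; subst hp; simp [smp_polAt_nil]
      | cons b r =>
          cases b
          · exact ihA r q ψ hp
          · exact ihB r q ψ hp
  | cstit i χ ih =>
      intro p q ψ hp
      cases p with
      | nil => simp [smp_subAt_nil] at hp; subst hp; simp [smp_polAt_nil]
      | cons b r =>
          cases b
          · simp [smp_subAt] at hp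
          · exact ih r q ψ hp
  | dstit i χ ih =>
      intro p q ψ hp
      cases p with
      | nil => simp [smp_subAt_nil] at hp; subst hp; simp [smp_polAt_nil]
      | cons b r =>
          cases b
          · simp [smp_subAt] at hp
          · exact ih r q ψ hp
  | box χ ih =>
      intro p q ψ hp
      cases p with
      | nil => simp [smp_subAt_nil] at hp; subst hp; simp [smp_polAt_nil]
      | cons b r =>
          cases b
          · simp [smp_subAt] at hp
          · exact ih r q ψ hp

lemma smp_subAt_noDstit :
    ∀ (φ : Fml) (p : List Bool) (ψ : Fml), smp_subAt φ p = some ψ →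
      NoDstit φ → NoDstit ψ := by
  intro φ
  induction φ with
  | atm a =>
      intro p ψ hp hd
      cases p with
      | nil => simp [smp_subAt_nil] at hp; subst hp; exact hd
      | cons b r => simp [smp_subAt] at hp
  | neg χ ih =>
      intro p ψ hp hd
      cases p with
      | nil => simp [smp_subAt_nil] at hp; subst hp; exact hd
      | cons b r =>
          cases b
          · simp [smp_subAt] at hp
          · exact ih r ψ hp hd
  | and A B ihA ihB =>
      intro p ψ hp hd
      cases p with
      | nil => simp [smp_subAt_nil] at hp; subst hp; exact hd
      | cons b r =>
          cases b
          · exact ihA r ψ hp hd.1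
          · exact ihB r ψ hp hd.2
  | cstit i χ ih =>
      intro p ψ hp hd
      cases p with
      | nil => simp [smp_subAt_nil] at hp; subst hp; exact hd
      | cons b r =>
          cases b
          · simp [smp_subAt] at hp
          · exact ih r ψ hp hd
  | dstit i χ ih => intro p ψ hp hd; exact absurd hd (by simp [NoDstit])
  | box χ ih =>
      intro p ψ hp hd
      cases p with
      | nil => simp [smp_subAt_nil] at hp; subst hp; exact hd
      | cons b r =>
          cases b
          · simp [smp_subAt] at hp
          · exact ih r ψ hp hd

lemma smp_subAt_agentsIn (A : Set ℕ) :
    ∀ (φ : Fml) (p : List Bool) (ψ : Fml), smp_subAt φ p = some ψ →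
      AgentsIn A φ → AgentsIn A ψ := by
  intro φ
  induction φ with
  | atm a =>
      intro p ψ hp hd
      cases p with
      | nil => simp [smp_subAt_nil] at hp; subst hp; exact hd
      | cons b r => simp [smp_subAt] at hp
  | neg χ ih =>
      intro p ψ hp hd
      cases p with
      | nil => simp [smp_subAt_nil] at hp; subst hp; exact hd
      | cons b r =>
          cases b
          · simp [smp_subAt] at hp
          · exact ih r ψ hp hd
  | and A' B ihA ihB =>
      intro p ψ hp hd
      cases p with
      | nil => simp [smp_subAt_nil] at hp; subst hp; exact hd
      | cons b r =>
          cases b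
          · exact ihA r ψ hp hd.1
          · exact ihB r ψ hp hd.2
  | cstit i χ ih =>
      intro p ψ hp hd
      cases p with
      | nil => simp [smp_subAt_nil] at hp; subst hp; exact hd
      | cons b r =>
          cases b
          · simp [smp_subAt] at hp
          · exact ih r ψ hp hd.2
  | dstit i χ ih =>
      intro p ψ hp hd
      cases p with
      | nil => simp [smp_subAt_nil] at hp; subst hp; exact hd
      | cons b r =>
          cases b
          · simp [smp_subAt] at hp
          · exact ih r ψ hp hd.2
  | box χ ih =>
      intro p ψ hp hd
      cases p with
      | nil => simp [smp_subAt_nil] at hp; subst hp; exact hd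
      | cons b r =>
          cases b
          · simp [smp_subAt] at hp
          · exact ih r ψ hp hd

lemma smp_posSet_card (φ : Fml) : (smp_posSet φ).card + 2 * smp_cOcc φ ≤ len φ := by
  induction φ with
  | atm p => simp [smp_posSet, smp_cOcc, len]
  | neg ψ ih =>
      have h1 := Finset.card_insert_le ([] : List Bool) ((smp_posSet ψ).image (List.cons true))
      have h2 := Finset.card_image_le (s := smp_posSet ψ) (f := List.cons true)
      simp only [smp_posSet, smp_cOcc, len]; omega
  | and A B ihA ihB =>
      have h1 := Finset.card_insert_le ([] : List Bool)
        (((smp_posSet A).image (List.cons false)) ∪ ((smp_posSet B).image (List.cons true)))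
      have h2 := Finset.card_union_le ((smp_posSet A).image (List.cons false))
        ((smp_posSet B).image (List.cons true))
      have h3 := Finset.card_image_le (s := smp_posSet A) (f := List.cons false)
      have h4 := Finset.card_image_le (s := smp_posSet B) (f := List.cons true)
      simp only [smp_posSet, smp_cOcc, len]; omega
  | cstit i ψ ih =>
      have h1 := Finset.card_insert_le ([] : List Bool) ((smp_posSet ψ).image (List.cons true))
      have h2 := Finset.card_image_le (s := smp_posSet ψ) (f := List.cons true)
      simp only [smp_posSet, smp_cOcc, len]; omega
  | dstit i ψ ih =>
      have h1 := Finset.card_insert_le ([] : List Bool) ((smp_posSet ψ).image (List.cons true))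
      have h2 := Finset.card_image_le (s := smp_posSet ψ) (f := List.cons true)
      simp only [smp_posSet, smp_cOcc, len]; omega
  | box ψ ih =>
      have h1 := Finset.card_insert_le ([] : List Bool) ((smp_posSet ψ).image (List.cons true))
      have h2 := Finset.card_image_le (s := smp_posSet ψ) (f := List.cons true)
      simp only [smp_posSet, smp_cOcc, len]; omega

lemma smp_subAt_neg' (χ : Fml) : smp_subAt (Fml.neg χ) [true] = some χ := by
  show smp_subAt χ [] = some χ
  exact smp_subAt_nil χ

lemma smp_subAt_andl' (A B : Fml) : smp_subAt (Fml.and A B) [false] = some A := by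
  show smp_subAt A [] = some A
  exact smp_subAt_nil A

lemma smp_subAt_andr' (A B : Fml) : smp_subAt (Fml.and A B) [true] = some B := by
  show smp_subAt B [] = some B
  exact smp_subAt_nil B

lemma smp_subAt_cstit' (i : ℕ) (χ : Fml) : smp_subAt (Fml.cstit i χ) [true] = some χ := by
  show smp_subAt χ [] = some χ
  exact smp_subAt_nil χ

lemma smp_subAt_box' (χ : Fml) : smp_subAt (Fml.box χ) [true] = some χ := by
  show smp_subAt χ [] = some χ
  exact smp_subAt_nil χ

/-! ### The small model construction when `Agt ⊆ {0}` -/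

section CaseB

attribute [local instance] Classical.propDecidable

variable {Agt : Set ℕ} (M : KModel Agt) (φ : Fml)

/-- `w` anchors the requirement set `Λ` of positions: at every position of `Λ`,
the truth value of the subformula there matches the polarity; moreover at
positive box-body positions the subformula holds throughout the `R 0`-cell. -/
def smp_Anch (w : M.W) (Λ : Finset (List Bool)) : Prop :=
  ∀ q ∈ Λ,
    (∀ ψ : Fml, smp_subAt φ q = some ψ → (ktruth M ψ w ↔ smp_polAt φ q = true)) ∧
    (∀ (p : List Bool) (χ ψ : Fml), smp_subAt φ p = some (.box χ) → q = p ++ [true] →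
        smp_polAt φ q = true → smp_subAt φ q = some ψ →
        ∀ v, M.R 0 w v → ktruth M ψ v)

/-- A canonical anchor of `Λ`. -/
noncomputable def smp_anchA (Λ : Finset (List Bool)) : M.W :=
  if h : ∃ w, smp_Anch M φ w Λ then h.choose else Classical.choice M.neW

/-- The world associated with the member `(Λ, t)` of a cell: for `t = some γ`
a witness in the cell of `smp_anchA Λ` falsifying the body of the cstit
occurrence `γ`, if one exists. -/
noncomputable def smp_wit (Λ : Finset (List Bool)) : Option (List Bool) → M.W
  | none => smp_anchA M φ Λ
  | some γ =>
      if h : ∃ v, M.R 0 (smp_anchA M φ Λ) v ∧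
          ∀ χ : Fml, smp_subAt φ (γ ++ [true]) = some χ → ¬ ktruth M χ v
      then h.choose else smp_anchA M φ Λ

/-- `q` is a relevant position for the requirement set `Λ`. -/
def smp_inRel (Λ : Finset (List Bool)) (q : List Bool) : Prop :=
  (smp_subAt φ q).isSome ∧ ∃ p ∈ Λ, p <+: q

/-- The requirement set spawned by the member `(Λ, t)` for the (negative)
box occurrence `γ`. -/
noncomputable def smp_child (Λ : Finset (List Bool)) (t : Option (List Bool))
    (γ : List Bool) : Finset (List Bool) :=
  insert (γ ++ [true])
    (((smp_posSet φ).filter (fun β => smp_inRel φ Λ β ∧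
        ∃ χ : Fml, smp_subAt φ β = some (.box χ) ∧ smp_polAt φ β = true ∧
          ktruth M (.box χ) (smp_wit M φ Λ t))).image (· ++ [true]))

/-- Worlds of the small model: a requirement set together with a cell tag. -/
def smp_Node : Type :=
  {x : Finset (List Bool) × Option (List Bool) //
    x.1 ⊆ smp_posSet φ ∧ (∃ w, smp_Anch M φ w x.1) ∧
    ∀ q ∈ x.2, ∃ (i : ℕ) (χ : Fml), smp_subAt φ q = some (.cstit i χ)}

/-- The accessibility relation interpreting `□` (via agent 1). -/
def smp_Edge (x y : smp_Node M φ) : Prop :=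
  ∃ (γ : List Bool) (χ : Fml), smp_inRel φ x.1.1 γ ∧
    smp_subAt φ γ = some (.box χ) ∧ smp_polAt φ γ = false ∧
    ¬ ktruth M (.box χ) (smp_wit M φ x.1.1 x.1.2) ∧
    y.1.1 = smp_child M φ x.1.1 x.1.2 γ

/-- The distinguished node with empty requirements (for nonemptiness). -/
noncomputable def smp_emptyNode : smp_Node M φ :=
  ⟨(∅, none), Finset.empty_subset _,
    ⟨Classical.choice M.neW, fun q hq => absurd hq (Finset.notMem_empty q)⟩,
    fun q hq => by simp at hq⟩

/-- The small Kripke model for the case `Agt ⊆ {0}`. -/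
noncomputable def smp_MB (h01 : ∀ i ∈ Agt, i = 0) : KModel Agt where
  W := smp_Node M φ
  neW := ⟨smp_emptyNode M φ⟩
  R := fun i x y => if i = 1 then smp_Edge M φ x y else x.1.1 = y.1.1
  equiv := by
    intro i hi
    have h : i = 0 := h01 i hi
    subst h
    simp only [if_neg (by norm_num : (0 : ℕ) ≠ 1)]
    exact ⟨fun x => rfl, fun h => h.symm, fun h h' => h.trans h'⟩
  V := fun p => {x | smp_wit M φ x.1.1 x.1.2 ∈ M.V p}

lemma smp_anchA_spec {Λ : Finset (List Bool)} (h : ∃ w, smp_Anch M φ w Λ) :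
    smp_Anch M φ (smp_anchA M φ Λ) Λ := by
  rw [smp_anchA, dif_pos h]
  exact h.choose_spec

lemma smp_wit_R0 (h0 : Equivalence (M.R 0)) (Λ : Finset (List Bool))
    (t : Option (List Bool)) : M.R 0 (smp_anchA M φ Λ) (smp_wit M φ Λ t) := by
  cases t with
  | none => exact h0.refl _
  | some γ =>
      rw [smp_wit]
      split
      · next h => exact h.choose_spec.1
      · exact h0.refl _

lemma smp_S_right (h0 : Equivalence (M.R 0)) {w v v' : M.W}
    (h : Relation.Comp (M.R 1) (M.R 0) w v) (h' : M.R 0 v v') :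
    Relation.Comp (M.R 1) (M.R 0) w v' := by
  obtain ⟨u, h1, h2⟩ := h
  exact ⟨u, h1, h0.trans h2 h'⟩

lemma smp_inRel_ext {Λ : Finset (List Bool)} {q : List Bool} {l : List Bool}
    (h : smp_inRel φ Λ q) (hs : (smp_subAt φ (q ++ l)).isSome) :
    smp_inRel φ Λ (q ++ l) := by
  obtain ⟨_, p, hp, hpre⟩ := h
  exact ⟨hs, p, hp, hpre.trans (List.prefix_append q l)⟩

end CaseB

section CaseBTruth

attribute [local instance] Classical.propDecidable

variable {Agt : Set ℕ} (M : KModel Agt) (φ : Fml)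

theorem smp_tlemB (h01 : ∀ i ∈ Agt, i = 0) (h0 : Equivalence (M.R 0))
    (hND : NoDstit φ) (hAI : AgentsIn Agt φ) :
    ∀ (ψ : Fml) (q : List Bool) (x : smp_Node M φ), smp_subAt φ q = some ψ →
      smp_inRel φ x.1.1 q →
      (smp_polAt φ q = true → ktruth M ψ (smp_wit M φ x.1.1 x.1.2) →
        ktruth (smp_MB M φ h01) ψ x) ∧
      (smp_polAt φ q = false → ¬ ktruth M ψ (smp_wit M φ x.1.1 x.1.2) →
        ¬ ktruth (smp_MB M φ h01) ψ x) := by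
  intro ψ
  induction ψ with
  | atm a =>
      intro q x hsub hrel
      constructor
      · intro _ hT
        exact hT
      · intro _ hF
        exact hF
  | neg χ ih =>
      intro q x hsub hrel
      have hsubχ : smp_subAt φ (q ++ [true]) = some χ := by
        rw [smp_subAt_append φ q [true] _ hsub]; exact smp_subAt_neg' χ
      have hpolχ : smp_polAt φ (q ++ [true]) = !(smp_polAt φ q) := by
        rw [smp_polAt_append φ q [true] _ hsub]
        have : smp_polAt (Fml.neg χ) [true] = false := by
          show (! smp_polAt χ []) = false
          rw [smp_polAt_nil]; rfl
        rw [this]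
        cases smp_polAt φ q <;> rfl
      have hrelχ : smp_inRel φ x.1.1 (q ++ [true]) :=
        smp_inRel_ext φ hrel (by rw [hsubχ]; rfl)
      have IH := ih (q ++ [true]) x hsubχ hrelχ
      constructor
      · intro hpol hT
        show ¬ ktruth (smp_MB M φ h01) χ x
        exact IH.2 (by rw [hpolχ, hpol]; rfl) hT
      · intro hpol hF
        show ¬ ¬ ktruth (smp_MB M φ h01) χ x
        intro hc
        exact hc (IH.1 (by rw [hpolχ, hpol]; rfl) (not_not.mp hF))
  | and A B ihA ihB =>
      intro q x hsub hrel
      have hsubA : smp_subAt φ (q ++ [false]) = some A := by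
        rw [smp_subAt_append φ q [false] _ hsub]; exact smp_subAt_andl' A B
      have hsubB : smp_subAt φ (q ++ [true]) = some B := by
        rw [smp_subAt_append φ q [true] _ hsub]; exact smp_subAt_andr' A B
      have hpolA : smp_polAt φ (q ++ [false]) = smp_polAt φ q := by
        rw [smp_polAt_append φ q [false] _ hsub]
        have : smp_polAt (Fml.and A B) [false] = true := by
          show smp_polAt A [] = true
          exact smp_polAt_nil A
        rw [this]
        cases smp_polAt φ q <;> rfl
      have hpolB : smp_polAt φ (q ++ [true]) = smp_polAt φ q := by
        rw [smp_polAt_append φ q [true] _ hsub]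
        have : smp_polAt (Fml.and A B) [true] = true := by
          show smp_polAt B [] = true
          exact smp_polAt_nil B
        rw [this]
        cases smp_polAt φ q <;> rfl
      have hrelA : smp_inRel φ x.1.1 (q ++ [false]) :=
        smp_inRel_ext φ hrel (by rw [hsubA]; rfl)
      have hrelB : smp_inRel φ x.1.1 (q ++ [true]) :=
        smp_inRel_ext φ hrel (by rw [hsubB]; rfl)
      have IHA := ihA (q ++ [false]) x hsubA hrelA
      have IHB := ihB (q ++ [true]) x hsubB hrelB
      constructor
      · intro hpol hT
        exact ⟨IHA.1 (by rw [hpolA, hpol]) hT.1, IHB.1 (by rw [hpolB, hpol]) hT.2⟩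
      · intro hpol hF
        show ¬ (ktruth (smp_MB M φ h01) A x ∧ ktruth (smp_MB M φ h01) B x)
        rintro ⟨hA', hB'⟩
        by_cases hA : ktruth M A (smp_wit M φ x.1.1 x.1.2)
        · have hB : ¬ ktruth M B (smp_wit M φ x.1.1 x.1.2) := fun hB => hF ⟨hA, hB⟩
          exact IHB.2 (by rw [hpolB, hpol]) hB hB'
        · exact IHA.2 (by rw [hpolA, hpol]) hA hA'
  | dstit i χ ih =>
      intro q x hsub hrel
      exact absurd (smp_subAt_noDstit φ q _ hsub hND) (by simp [NoDstit])
  | cstit i χ ih =>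
      intro q x hsub hrel
      have hi0 : i = 0 := h01 i (smp_subAt_agentsIn Agt φ q _ hsub hAI).1
      subst hi0
      have hsubχ : smp_subAt φ (q ++ [true]) = some χ := by
        rw [smp_subAt_append φ q [true] _ hsub]; exact smp_subAt_cstit' 0 χ
      have hpolχ : smp_polAt φ (q ++ [true]) = smp_polAt φ q := by
        rw [smp_polAt_append φ q [true] _ hsub]
        have : smp_polAt (Fml.cstit 0 χ) [true] = true := by
          show smp_polAt χ [] = true
          exact smp_polAt_nil χ
        rw [this]
        cases smp_polAt φ q <;> rfl
      constructor
      · intro hpol hT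
        show ∀ y, (smp_MB M φ h01).R 0 x y → ktruth (smp_MB M φ h01) χ y
        intro y hy
        have hyΛ : x.1.1 = y.1.1 := by
          simpa [smp_MB] using hy
        have hrelχ : smp_inRel φ y.1.1 (q ++ [true]) := by
          rw [← hyΛ]
          exact smp_inRel_ext φ hrel (by rw [hsubχ]; rfl)
        refine (ih (q ++ [true]) y hsubχ hrelχ).1 (by rw [hpolχ, hpol]) ?_
        -- the witness of `y` lies in the `R 0` cell of the witness of `x`
        have h1 : M.R 0 (smp_anchA M φ x.1.1) (smp_wit M φ x.1.1 x.1.2) :=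
          smp_wit_R0 M φ h0 _ _
        have h2 : M.R 0 (smp_anchA M φ y.1.1) (smp_wit M φ y.1.1 y.1.2) :=
          smp_wit_R0 M φ h0 _ _
        have heq : smp_anchA M φ x.1.1 = smp_anchA M φ y.1.1 := by rw [hyΛ]
        rw [← heq] at h2
        exact hT _ (h0.trans (h0.symm h1) h2)
      · intro hpol hF
        have hFv : ∃ v, M.R 0 (smp_wit M φ x.1.1 x.1.2) v ∧ ¬ ktruth M χ v := by
          by_contra hc
          push_neg at hc
          exact hF (fun v hv => hc v hv)
        obtain ⟨v, hv, hvχ⟩ := hFv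
        -- condition for the cell witness at tag `q`
        have hcond : ∃ v', M.R 0 (smp_anchA M φ x.1.1) v' ∧
            ∀ χ' : Fml, smp_subAt φ (q ++ [true]) = some χ' → ¬ ktruth M χ' v' := by
          refine ⟨v, h0.trans (smp_wit_R0 M φ h0 _ _) hv, ?_⟩
          intro χ' hχ'
          rw [hsubχ] at hχ'
          injection hχ' with h
          rw [← h]
          exact hvχ
        -- the cell-mate node
        refine fun H => ?_
        have hynode : x.1.1 ⊆ smp_posSet φ ∧ (∃ w, smp_Anch M φ w x.1.1) ∧
            ∀ q' ∈ (some q : Option (List Bool)),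
              ∃ (i : ℕ) (χ' : Fml), smp_subAt φ q' = some (.cstit i χ') := by
          refine ⟨x.2.1, x.2.2.1, ?_⟩
          intro q' hq'
          have hqq : q = q' := by simpa using hq'
          subst hqq
          exact ⟨0, χ, hsub⟩
        set y : smp_Node M φ := ⟨(x.1.1, some q), hynode⟩ with hy
        have hxy : (smp_MB M φ h01).R 0 x y := by
          show (if (0 : ℕ) = 1 then smp_Edge M φ x y else x.1.1 = y.1.1)
          rw [if_neg (by norm_num : (0:ℕ) ≠ 1)]
        have hχy : ktruth (smp_MB M φ h01) χ y := H y hxy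
        -- but the witness of `y` falsifies `χ`
        have hwity : ¬ ktruth M χ (smp_wit M φ y.1.1 y.1.2) := by
          show ¬ ktruth M χ (smp_wit M φ x.1.1 (some q))
          rw [smp_wit, dif_pos hcond]
          exact hcond.choose_spec.2 χ hsubχ
        have hrelχy : smp_inRel φ y.1.1 (q ++ [true]) :=
          smp_inRel_ext φ hrel (by rw [hsubχ]; rfl)
        exact (ih (q ++ [true]) y hsubχ hrelχy).2 (by rw [hpolχ, hpol]) hwity hχy
  | box χ ih =>
      intro q x hsub hrel
      have hsubχ : smp_subAt φ (q ++ [true]) = some χ := by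
        rw [smp_subAt_append φ q [true] _ hsub]; exact smp_subAt_box' χ
      have hpolχ : smp_polAt φ (q ++ [true]) = smp_polAt φ q := by
        rw [smp_polAt_append φ q [true] _ hsub]
        have : smp_polAt (Fml.box χ) [true] = true := by
          show smp_polAt χ [] = true
          exact smp_polAt_nil χ
        rw [this]
        cases smp_polAt φ q <;> rfl
      have hqpos : q ∈ smp_posSet φ :=
        smp_mem_posSet_of_isSome φ q (by rw [hsub]; rfl)
      constructor
      · intro hpol hT
        show ∀ y, Relation.Comp ((smp_MB M φ h01).R 1) ((smp_MB M φ h01).R 0) x y →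
          ktruth (smp_MB M φ h01) χ y
        rintro y ⟨h, h1, h2⟩
        have hE : smp_Edge M φ x h := by simpa [smp_MB] using h1
        have hΛ : h.1.1 = y.1.1 := by simpa [smp_MB] using h2
        obtain ⟨γ, χγ, hγrel, hγsub, hγpol, hγF, hchild⟩ := hE
        -- q ++ [true] belongs to the spawned requirement set
        have hmem : q ++ [true] ∈ y.1.1 := by
          rw [← hΛ, hchild, smp_child]
          refine Finset.mem_insert_of_mem ?_
          refine Finset.mem_image.2 ⟨q, ?_, rfl⟩
          refine Finset.mem_filter.2 ⟨hqpos, hrel, χ, hsub, hpol, hT⟩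
        have hrely : smp_inRel φ y.1.1 (q ++ [true]) :=
          ⟨by rw [hsubχ]; rfl, q ++ [true], hmem, List.prefix_rfl⟩
        refine (ih (q ++ [true]) y hsubχ hrely).1 (by rw [hpolχ, hpol]) ?_
        have hanch : smp_Anch M φ (smp_anchA M φ y.1.1) y.1.1 :=
          smp_anchA_spec M φ y.2.2.1
        have := (hanch _ hmem).2 q χ χ hsub rfl (by rw [hpolχ, hpol]) hsubχ
        exact this _ (smp_wit_R0 M φ h0 _ _)
      · intro hpol hF
        have hFv : ∃ v, Relation.Comp (M.R 1) (M.R 0) (smp_wit M φ x.1.1 x.1.2) v ∧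
            ¬ ktruth M χ v := by
          by_contra hc
          push_neg at hc
          exact hF (fun v hv => hc v hv)
        obtain ⟨v, hSv, hvχ⟩ := hFv
        set Λc := smp_child M φ x.1.1 x.1.2 q with hΛc
        -- Λc consists of valid positions
        have hsubΛc : Λc ⊆ smp_posSet φ := by
          intro q' hq'
          rw [hΛc, smp_child] at hq'
          rcases Finset.mem_insert.1 hq' with rfl | hq'
          · exact smp_mem_posSet_of_isSome φ _ (by rw [hsubχ]; rfl)
          · obtain ⟨β, hβ, rfl⟩ := Finset.mem_image.1 hq'
            obtain ⟨hβpos, hβrel, χβ, hβsub, hβpol, hβT⟩ := Finset.mem_filter.1 hβ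
            have : smp_subAt φ (β ++ [true]) = some χβ := by
              rw [smp_subAt_append φ β [true] _ hβsub]; exact smp_subAt_box' χβ
            exact smp_mem_posSet_of_isSome φ _ (by rw [this]; rfl)
        -- v anchors Λc
        have hanchv : smp_Anch M φ v Λc := by
          intro q' hq'
          rw [hΛc, smp_child] at hq'
          rcases Finset.mem_insert.1 hq' with rfl | hq'
          · constructor
            · intro ψ' hψ'
              rw [hsubχ] at hψ'
              injection hψ' with h
              subst h
              rw [hpolχ, hpol]
              simp [hvχ]
            · intro p χ' ψ' hp hqp hpolq' hψ'
              rw [hpolχ, hpol] at hpolq'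
              exact absurd hpolq' (by simp)
          · obtain ⟨β, hβ, rfl⟩ := Finset.mem_image.1 hq'
            obtain ⟨hβpos, hβrel, χβ, hβsub, hβpol, hβT⟩ := Finset.mem_filter.1 hβ
            have hsubβ : smp_subAt φ (β ++ [true]) = some χβ := by
              rw [smp_subAt_append φ β [true] _ hβsub]; exact smp_subAt_box' χβ
            have hpolβ : smp_polAt φ (β ++ [true]) = true := by
              rw [smp_polAt_append φ β [true] _ hβsub]
              have : smp_polAt (Fml.box χβ) [true] = true := by
                show smp_polAt χβ [] = true
                exact smp_polAt_nil χβ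
              rw [this, hβpol]; rfl
            constructor
            · intro ψ' hψ'
              rw [hsubβ] at hψ'
              injection hψ' with h
              subst h
              rw [hpolβ]
              simp [hβT v hSv]
            · intro p χ' ψ' hp hqp hpolq' hψ'
              rw [hsubβ] at hψ'
              injection hψ' with h
              subst h
              intro v' hvv'
              exact hβT v' (smp_S_right M h0 hSv hvv')
        -- the spawned node
        have hnodey : Λc ⊆ smp_posSet φ ∧ (∃ w, smp_Anch M φ w Λc) ∧
            ∀ q' ∈ (none : Option (List Bool)),
              ∃ (i : ℕ) (χ' : Fml), smp_subAt φ q' = some (.cstit i χ') := by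
          exact ⟨hsubΛc, ⟨v, hanchv⟩, fun q' hq' => by simp at hq'⟩
        set y : smp_Node M φ := ⟨(Λc, none), hnodey⟩ with hy
        have hEdge : smp_Edge M φ x y := ⟨q, χ, hrel, hsub, hpol, hF, rfl⟩
        have hComp : Relation.Comp ((smp_MB M φ h01).R 1) ((smp_MB M φ h01).R 0) x y := by
          refine ⟨y, ?_, ?_⟩
          · show (if (1 : ℕ) = 1 then smp_Edge M φ x y else x.1.1 = y.1.1)
            rw [if_pos rfl]
            exact hEdge
          · show (if (0 : ℕ) = 1 then smp_Edge M φ y y else y.1.1 = y.1.1)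
            rw [if_neg (by norm_num : (0:ℕ) ≠ 1)]
        intro H
        have hχy : ktruth (smp_MB M φ h01) χ y := H y hComp
        have hrely : smp_inRel φ y.1.1 (q ++ [true]) :=
          ⟨by rw [hsubχ]; rfl, q ++ [true], Finset.mem_insert_self _ _, List.prefix_rfl⟩
        have hwity : ¬ ktruth M χ (smp_wit M φ y.1.1 y.1.2) := by
          show ¬ ktruth M χ (smp_wit M φ Λc none)
          have hanch : smp_Anch M φ (smp_anchA M φ Λc) Λc :=
            smp_anchA_spec M φ ⟨v, hanchv⟩
          have := (hanch (q ++ [true]) (Finset.mem_insert_self _ _)).1 χ hsubχ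
          rw [hpolχ, hpol] at this
          intro hc
          simpa using this.1 hc
        exact (ih (q ++ [true]) y hsubχ hrely).2 (by rw [hpolχ, hpol]) hwity hχy

end CaseBTruth

section CaseBWrap

attribute [local instance] Classical.propDecidable

variable {Agt : Set ℕ} (M : KModel Agt) (φ : Fml)

/-- The set of cstit-occurrence positions. -/
def smp_cPos : Fml → Finset (List Bool)
  | .atm _ => ∅
  | .neg ψ => (smp_cPos ψ).image (List.cons true)
  | .and A B => ((smp_cPos A).image (List.cons false)) ∪ ((smp_cPos B).image (List.cons true))
  | .cstit _ ψ => insert [] ((smp_cPos ψ).image (List.cons true))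
  | .dstit _ ψ => (smp_cPos ψ).image (List.cons true)
  | .box ψ => (smp_cPos ψ).image (List.cons true)

lemma smp_cPos_card (φ : Fml) : (smp_cPos φ).card ≤ smp_cOcc φ := by
  induction φ with
  | atm p => simp [smp_cPos, smp_cOcc]
  | neg ψ ih =>
      have h2 := Finset.card_image_le (s := smp_cPos ψ) (f := List.cons true)
      simp only [smp_cPos, smp_cOcc]; omega
  | and A B ihA ihB =>
      have h2 := Finset.card_union_le ((smp_cPos A).image (List.cons false))
        ((smp_cPos B).image (List.cons true))
      have h3 := Finset.card_image_le (s := smp_cPos A) (f := List.cons false)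
      have h4 := Finset.card_image_le (s := smp_cPos B) (f := List.cons true)
      simp only [smp_cPos, smp_cOcc]; omega
  | cstit i ψ ih =>
      have h1 := Finset.card_insert_le ([] : List Bool) ((smp_cPos ψ).image (List.cons true))
      have h2 := Finset.card_image_le (s := smp_cPos ψ) (f := List.cons true)
      simp only [smp_cPos, smp_cOcc]; omega
  | dstit i ψ ih =>
      have h2 := Finset.card_image_le (s := smp_cPos ψ) (f := List.cons true)
      simp only [smp_cPos, smp_cOcc]; omega
  | box ψ ih =>
      have h2 := Finset.card_image_le (s := smp_cPos ψ) (f := List.cons true)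
      simp only [smp_cPos, smp_cOcc]; omega

lemma smp_mem_cPos :
    ∀ (φ : Fml) (q : List Bool) (i : ℕ) (χ : Fml),
      smp_subAt φ q = some (.cstit i χ) → q ∈ smp_cPos φ := by
  intro φ
  induction φ with
  | atm a =>
      intro q i χ hq
      cases q with
      | nil => rw [smp_subAt_nil] at hq; exact absurd hq (by simp)
      | cons b r => simp [smp_subAt] at hq
  | neg ψ ih =>
      intro q i χ hq
      cases q with
      | nil => rw [smp_subAt_nil] at hq; exact absurd hq (by simp)
      | cons b r =>
          cases b
          · simp [smp_subAt] at hq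
          · exact Finset.mem_image.2 ⟨r, ih r i χ hq, rfl⟩
  | and A B ihA ihB =>
      intro q i χ hq
      cases q with
      | nil => rw [smp_subAt_nil] at hq; exact absurd hq (by simp)
      | cons b r =>
          cases b
          · exact Finset.mem_union.2 (Or.inl (Finset.mem_image.2 ⟨r, ihA r i χ hq, rfl⟩))
          · exact Finset.mem_union.2 (Or.inr (Finset.mem_image.2 ⟨r, ihB r i χ hq, rfl⟩))
  | cstit j ψ ih =>
      intro q i χ hq
      cases q with
      | nil => exact Finset.mem_insert_self _ _
      | cons b r =>
          cases b
          · simp [smp_subAt] at hq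
          · exact Finset.mem_insert_of_mem (Finset.mem_image.2 ⟨r, ih r i χ hq, rfl⟩)
  | dstit j ψ ih =>
      intro q i χ hq
      cases q with
      | nil => rw [smp_subAt_nil] at hq; exact absurd hq (by simp)
      | cons b r =>
          cases b
          · simp [smp_subAt] at hq
          · exact Finset.mem_image.2 ⟨r, ih r i χ hq, rfl⟩
  | box ψ ih =>
      intro q i χ hq
      cases q with
      | nil => rw [smp_subAt_nil] at hq; exact absurd hq (by simp)
      | cons b r =>
          cases b
          · simp [smp_subAt] at hq
          · exact Finset.mem_image.2 ⟨r, ih r i χ hq, rfl⟩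

lemma smp_MB_genPerm (h01 : ∀ i ∈ Agt, i = 0) : GenPerm (smp_MB M φ h01) := by
  intro w v l hl m hm n hn _
  have hn0 : n = 0 := h01 n hn
  subst hn0
  refine ⟨w, ?_, ?_⟩
  · show (if (0 : ℕ) = 1 then smp_Edge M φ w w else w.1.1 = w.1.1)
    rw [if_neg (by norm_num : (0:ℕ) ≠ 1)]
  · intro i hi hne
    exact absurd (h01 i hi) hne

lemma smp_MB_card (h01 : ∀ i ∈ Agt, i = 0) :
    Cardinal.mk (smp_MB M φ h01).W ≤ 2 ^ len φ := by
  -- inject the nodes into a finite set of pairs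
  set T : Finset (Finset (List Bool) × Option (List Bool)) :=
    (smp_posSet φ).powerset ×ˢ
      (insert (none : Option (List Bool)) ((smp_cPos φ).image some)) with hT
  have hinj : ∃ f : (smp_MB M φ h01).W → ↥T, Function.Injective f := by
    refine ⟨fun x => ⟨x.1, ?_⟩, ?_⟩
    · rw [hT, Finset.mem_product]
      constructor
      · exact Finset.mem_powerset.2 x.2.1
      · rcases hx2 : x.1.2 with _ | q
        · exact Finset.mem_insert_self _ _
        · refine Finset.mem_insert_of_mem (Finset.mem_image.2 ⟨q, ?_, rfl⟩)
          obtain ⟨i, χ, hq⟩ := x.2.2.2 q (by rw [hx2]; rfl)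
          exact smp_mem_cPos φ q i χ hq
    · intro x y hxy
      apply Subtype.ext
      have := congrArg Subtype.val hxy
      simpa using this

  obtain ⟨f, hf⟩ := hinj
  have h1 : Cardinal.mk (smp_MB M φ h01).W ≤ Cardinal.mk ↥T :=
    Cardinal.mk_le_of_injective hf
  have h2 : Cardinal.mk ↥T = (T.card : Cardinal) := by
    simp [Cardinal.mk_coe_finset]
  have hcard : T.card = 2 ^ (smp_posSet φ).card * (1 + (smp_cPos φ).card) := by
    rw [hT, Finset.card_product, Finset.card_powerset]
    congr 1
    rw [Finset.card_insert_of_notMem (by simp)]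
    rw [Finset.card_image_of_injective _ (Option.some_injective _)]
    omega
  have hnat : T.card ≤ 2 ^ len φ := by
    rw [hcard]
    have hA : (smp_posSet φ).card + 2 * smp_cOcc φ ≤ len φ := smp_posSet_card φ
    have hB : (smp_cPos φ).card ≤ smp_cOcc φ := smp_cPos_card φ
    have hC : 1 + (smp_cPos φ).card ≤ 4 ^ smp_cOcc φ := by
      have := smp_succ_le_four_pow (smp_cOcc φ)
      omega
    calc 2 ^ (smp_posSet φ).card * (1 + (smp_cPos φ).card)
        ≤ 2 ^ (smp_posSet φ).card * 4 ^ smp_cOcc φ :=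
          Nat.mul_le_mul_left _ hC
      _ = 2 ^ (smp_posSet φ).card * 2 ^ (2 * smp_cOcc φ) := by
          rw [pow_mul]; norm_num
      _ = 2 ^ ((smp_posSet φ).card + 2 * smp_cOcc φ) := by
          rw [pow_add]
      _ ≤ 2 ^ len φ := Nat.pow_le_pow_right (by norm_num) hA
  calc Cardinal.mk (smp_MB M φ h01).W ≤ (T.card : Cardinal) := h2 ▸ h1
    _ ≤ ((2 ^ len φ : ℕ) : Cardinal) := by exact_mod_cast hnat
    _ = (2 : Cardinal) ^ len φ := smp_cast_pow_two (len φ)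

/-- Conclusion of the case `Agt ⊆ {0}`. -/
theorem smp_caseB (h01 : ∀ i ∈ Agt, i = 0) (h0 : Equivalence (M.R 0))
    (hND : NoDstit φ) (hAI : AgentsIn Agt φ) (w0 : M.W) (hw0 : ktruth M φ w0) :
    ∃ M' : KModel Agt, GenPerm M' ∧ (∃ w : M'.W, ktruth M' φ w) ∧
      Cardinal.mk M'.W ≤ 2 ^ len φ := by
  -- the root node
  have hanch0 : ∃ w, smp_Anch M φ w ({[]} : Finset (List Bool)) := by
    refine ⟨w0, ?_⟩
    intro q hq
    have hq0 : q = [] := by simpa using hq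
    subst hq0
    constructor
    · intro ψ hψ
      rw [smp_subAt_nil] at hψ
      injection hψ with h
      subst h
      rw [smp_polAt_nil]
      simp [hw0]
    · intro p χ' ψ' hp hqp hpol hψ'
      exact absurd hqp.symm (by simp)
  have hroot : ({[]} : Finset (List Bool)) ⊆ smp_posSet φ ∧
      (∃ w, smp_Anch M φ w ({[]} : Finset (List Bool))) ∧
      ∀ q ∈ (none : Option (List Bool)),
        ∃ (i : ℕ) (χ : Fml), smp_subAt φ q = some (.cstit i χ) := by
    refine ⟨?_, hanch0, fun q hq => by simp at hq⟩
    intro q hq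
    have hq0 : q = [] := by simpa using hq
    subst hq0
    exact smp_nil_mem_posSet φ
  set x0 : smp_Node M φ := ⟨(({[]} : Finset (List Bool)), none), hroot⟩ with hx0
  have hrel0 : smp_inRel φ x0.1.1 [] := by
    refine ⟨by rw [smp_subAt_nil]; rfl, [], ?_, List.prefix_rfl⟩
    simp [hx0]
  have hwit0 : ktruth M φ (smp_wit M φ x0.1.1 x0.1.2) := by
    show ktruth M φ (smp_wit M φ ({[]} : Finset (List Bool)) none)
    have hanch := smp_anchA_spec M φ hanch0
    have := (hanch [] (by simp)).1 φ (smp_subAt_nil φ)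
    rw [smp_polAt_nil] at this
    exact this.2 rfl
  refine ⟨smp_MB M φ h01, smp_MB_genPerm M φ h01, ⟨x0, ?_⟩, smp_MB_card M φ h01⟩
  exact (smp_tlemB M φ h01 h0 hND hAI φ [] x0 (smp_subAt_nil φ) hrel0).1 (smp_polAt_nil φ) hwit0

end CaseBWrap

section Preprocess

attribute [local instance] Classical.propDecidable

variable {Agt : Set ℕ} (M : KModel Agt)

/-- Preprocessed model for the case `1 ∉ Agt`: interpret agent `1` by the
composed relation and make `R 0` an equivalence even when `0 ∉ Agt`. -/
noncomputable def smp_Mt (h1 : 1 ∉ Agt) : KModel Agt where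
  W := M.W
  neW := M.neW
  R := fun i => if i = 0 then (if 0 ∈ Agt then M.R 0 else fun a b => a = b)
    else if i = 1 then Relation.Comp (M.R 1) (M.R 0) else M.R i
  equiv := by
    intro i hi
    by_cases hi0 : i = 0
    · subst hi0
      rw [if_pos rfl, if_pos hi]
      exact M.equiv 0 hi
    · rw [if_neg hi0, if_neg (by rintro rfl; exact h1 hi)]
      exact M.equiv i hi
  V := M.V

lemma smp_Mt_R0 (h1 : 1 ∉ Agt) :
    (smp_Mt M h1).R 0 = if 0 ∈ Agt then M.R 0 else fun a b => a = b := by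
  simp [smp_Mt]

lemma smp_Mt_R0_equiv (h1 : 1 ∉ Agt) : Equivalence ((smp_Mt M h1).R 0) := by
  rw [smp_Mt_R0]
  by_cases h0 : 0 ∈ Agt
  · rw [if_pos h0]; exact M.equiv 0 h0
  · rw [if_neg h0]; exact ⟨fun _ => rfl, fun h => h.symm, fun h h' => h.trans h'⟩

lemma smp_Mt_R1 (h1 : 1 ∉ Agt) :
    (smp_Mt M h1).R 1 = Relation.Comp (M.R 1) (M.R 0) := by
  simp [smp_Mt]

lemma smp_Mt_comp (h1 : 1 ∉ Agt) (w v : M.W) :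
    Relation.Comp ((smp_Mt M h1).R 1) ((smp_Mt M h1).R 0) w v ↔
      Relation.Comp (M.R 1) (M.R 0) w v := by
  rw [smp_Mt_R1, smp_Mt_R0]
  by_cases h0 : 0 ∈ Agt
  · rw [if_pos h0]
    constructor
    · rintro ⟨u, ⟨a, h1a, h0au⟩, h0uv⟩
      exact ⟨a, h1a, (M.equiv 0 h0).trans h0au h0uv⟩
    · intro h
      exact ⟨v, h, (M.equiv 0 h0).refl v⟩
  · rw [if_neg h0]
    constructor
    · rintro ⟨u, hu, hueq⟩
      exact hueq ▸ hu
    · intro h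
      exact ⟨v, h, rfl⟩

lemma smp_Mt_ktruth (h1 : 1 ∉ Agt) :
    ∀ ψ : Fml, NoDstit ψ → AgentsIn Agt ψ → ∀ w : M.W,
      (ktruth (smp_Mt M h1) ψ w ↔ ktruth M ψ w) := by
  intro ψ
  induction ψ with
  | atm a => intro _ _ w; exact Iff.rfl
  | neg χ ih =>
      intro hND hAI w
      exact not_congr (ih hND hAI w)
  | and A B ihA ihB =>
      intro hND hAI w
      exact and_congr (ihA hND.1 hAI.1 w) (ihB hND.2 hAI.2 w)
  | cstit i χ ih =>
      intro hND hAI w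
      have hi : i ∈ Agt := hAI.1
      have hRi : (smp_Mt M h1).R i = M.R i := by
        by_cases hi0 : i = 0
        · subst hi0
          rw [smp_Mt_R0, if_pos hi]
        · show (if i = 0 then (if 0 ∈ Agt then M.R 0 else fun a b => a = b)
              else if i = 1 then Relation.Comp (M.R 1) (M.R 0) else M.R i) = M.R i
          rw [if_neg hi0, if_neg (by rintro rfl; exact h1 hi)]
      constructor
      · intro h u hu
        exact (ih hND hAI.2 u).1 (h u (by rw [hRi]; exact hu))
      · intro h u hu
        rw [hRi] at hu
        exact (ih hND hAI.2 u).2 (h u hu)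
  | dstit i χ ih =>
      intro hND _ w
      exact absurd hND (by simp [NoDstit])
  | box χ ih =>
      intro hND hAI w
      constructor
      · intro h u hu
        exact (ih hND hAI u).1 (h u ((smp_Mt_comp M h1 w u).2 hu))
      · intro h u hu
        exact (ih hND hAI u).2 (h u ((smp_Mt_comp M h1 w u).1 hu))

end Preprocess

section CaseA

attribute [local instance] Classical.propDecidable

variable {Agt : Set ℕ} (M : KModel Agt)

/-- The historic-necessity relation. -/
def smp_E (w v : M.W) : Prop := Relation.Comp (M.R 1) (M.R 0) w v

lemma smp_E_sub (h0 : 0 ∈ Agt) (h1 : 1 ∈ Agt) (hGP : GenPerm M) {l m : ℕ} (hl : l ∈ Agt) (hm : m ∈ Agt) {w v : M.W}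
    (h : Relation.Comp (M.R l) (M.R m) w v) : smp_E M w v := by
  obtain ⟨u, h1u, hrest⟩ := hGP w v l hl m hm 1 h1 h
  exact ⟨u, h1u, hrest 0 h0 (by norm_num)⟩

lemma smp_E_refl (h0 : 0 ∈ Agt) (h1 : 1 ∈ Agt) (w : M.W) : smp_E M w w :=
  ⟨w, (M.equiv 1 h1).refl w, (M.equiv 0 h0).refl w⟩

lemma smp_E_symm (h0 : 0 ∈ Agt) (h1 : 1 ∈ Agt) (hGP : GenPerm M) {w v : M.W} (h : smp_E M w v) : smp_E M v w := by
  obtain ⟨u, hwu, huv⟩ := h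
  exact smp_E_sub M h0 h1 hGP h0 h1
    ⟨u, (M.equiv 0 h0).symm huv, (M.equiv 1 h1).symm hwu⟩

lemma smp_E_trans (h0 : 0 ∈ Agt) (h1 : 1 ∈ Agt) (hGP : GenPerm M) {w u v : M.W} (h : smp_E M w u) (h' : smp_E M u v) :
    smp_E M w v := by
  obtain ⟨a, hwa, hau⟩ := h
  obtain ⟨b, hub, hbv⟩ := h'
  obtain ⟨c, hac, hcb⟩ := smp_E_sub M h0 h1 hGP h0 h1 ⟨u, hau, hub⟩
  exact ⟨c, (M.equiv 1 h1).trans hwa hac, (M.equiv 0 h0).trans hcb hbv⟩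

lemma smp_R_sub_E (h0 : 0 ∈ Agt) (h1 : 1 ∈ Agt) (hGP : GenPerm M) {i : ℕ} (hi : i ∈ Agt) {w v : M.W} (h : M.R i w v) :
    smp_E M w v :=
  smp_E_sub M h0 h1 hGP hi hi ⟨v, h, (M.equiv i hi).refl v⟩

/-- The restriction of `M` to the `E`-class of `w0`. -/
def smp_MA2 (h0 : 0 ∈ Agt) (h1 : 1 ∈ Agt) (w0 : M.W) : KModel Agt where
  W := {v : M.W // smp_E M w0 v}
  neW := ⟨⟨w0, smp_E_refl M h0 h1 w0⟩⟩
  R := fun i x y => M.R i x.1 y.1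
  equiv := fun i hi =>
    ⟨fun x => (M.equiv i hi).refl x.1, fun h => (M.equiv i hi).symm h,
      fun h h' => (M.equiv i hi).trans h h'⟩
  V := fun p => {x | x.1 ∈ M.V p}

lemma smp_MA2_ktruth (h0 : 0 ∈ Agt) (h1 : 1 ∈ Agt) (hGP : GenPerm M) (w0 : M.W) :
    ∀ ψ : Fml, NoDstit ψ → AgentsIn Agt ψ →
      ∀ x : (smp_MA2 M h0 h1 w0).W,
        ktruth (smp_MA2 M h0 h1 w0) ψ x ↔ ktruth M ψ x.1 := by
  intro ψ
  induction ψ with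
  | atm a => intro _ _ x; exact Iff.rfl
  | neg χ ih => intro hND hAI x; exact not_congr (ih hND hAI x)
  | and A B ihA ihB =>
      intro hND hAI x
      exact and_congr (ihA hND.1 hAI.1 x) (ihB hND.2 hAI.2 x)
  | cstit i χ ih =>
      intro hND hAI x
      have hi : i ∈ Agt := hAI.1
      constructor
      · intro h v hv
        have hvE : smp_E M w0 v := smp_E_trans M h0 h1 hGP x.2 (smp_R_sub_E M h0 h1 hGP hi hv)
        exact (ih hND hAI.2 ⟨v, hvE⟩).1 (h ⟨v, hvE⟩ hv)
      · intro h y hy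
        exact (ih hND hAI.2 y).2 (h y.1 hy)
  | dstit i χ ih => intro hND _ x; exact absurd hND (by simp [NoDstit])
  | box χ ih =>
      intro hND hAI x
      constructor
      · intro h v hv
        have hvE : smp_E M w0 v := smp_E_trans M h0 h1 hGP x.2 hv
        obtain ⟨u, h1u, h0uv⟩ := hv
        have huE : smp_E M w0 u :=
          smp_E_trans M h0 h1 hGP x.2 (smp_R_sub_E M h0 h1 hGP h1 h1u)
        exact (ih hND hAI ⟨v, hvE⟩).1 (h ⟨v, hvE⟩ ⟨⟨u, huE⟩, h1u, h0uv⟩)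
      · intro h y hy
        obtain ⟨u, h1u, h0uv⟩ := hy
        exact (ih hND hAI y).2 (h y.1 ⟨u.1, h1u, h0uv⟩)

lemma smp_MA2_total (h0 : 0 ∈ Agt) (h1 : 1 ∈ Agt) (hGP : GenPerm M) (w0 : M.W) (x y : (smp_MA2 M h0 h1 w0).W) :
    Relation.Comp ((smp_MA2 M h0 h1 w0).R 1) ((smp_MA2 M h0 h1 w0).R 0) x y := by
  have hxy : smp_E M x.1 y.1 := smp_E_trans M h0 h1 hGP (smp_E_symm M h0 h1 hGP x.2) y.2
  obtain ⟨u, h1u, h0uv⟩ := hxy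
  have huE : smp_E M w0 u :=
    smp_E_trans M h0 h1 hGP x.2 (smp_R_sub_E M h0 h1 hGP h1 h1u)
  exact ⟨⟨u, huE⟩, h1u, h0uv⟩

lemma smp_MA2_genPerm (h0 : 0 ∈ Agt) (h1 : 1 ∈ Agt) (hGP : GenPerm M) (w0 : M.W) : GenPerm (smp_MA2 M h0 h1 w0) := by
  intro x y l hl m hm n hn hcomp
  obtain ⟨z, hxz, hzy⟩ := hcomp
  obtain ⟨u, hnu, hrest⟩ := hGP x.1 y.1 l hl m hm n hn ⟨z.1, hxz, hzy⟩
  have huE : smp_E M w0 u :=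
    smp_E_trans M h0 h1 hGP x.2 (smp_R_sub_E M h0 h1 hGP hn hnu)
  exact ⟨⟨u, huE⟩, hnu, fun i hi hne => hrest i hi hne⟩

/-- Filtration map: the set of subformulas of `φ` true at a world. -/
noncomputable def smp_th (h0 : 0 ∈ Agt) (h1 : 1 ∈ Agt) (w0 : M.W) (φ : Fml) (x : (smp_MA2 M h0 h1 w0).W) : Finset Fml :=
  (sf φ).filter (fun ψ => ktruth (smp_MA2 M h0 h1 w0) ψ x)

lemma smp_th_mem (h0 : 0 ∈ Agt) (h1 : 1 ∈ Agt) (w0 : M.W) (φ : Fml) {ψ : Fml} (hψ : ψ ∈ sf φ) (x : (smp_MA2 M h0 h1 w0).W) :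
    ψ ∈ smp_th M h0 h1 w0 φ x ↔ ktruth (smp_MA2 M h0 h1 w0) ψ x := by
  rw [smp_th, Finset.mem_filter]
  exact ⟨fun h => h.2, fun h => ⟨hψ, h⟩⟩

/-- Agreement: `R i`-related worlds satisfy the same `[i]`-formulas. -/
lemma smp_agree (h0 : 0 ∈ Agt) (h1 : 1 ∈ Agt) (w0 : M.W) {i : ℕ} (hi : i ∈ Agt) {x u : (smp_MA2 M h0 h1 w0).W}
    (h : (smp_MA2 M h0 h1 w0).R i x u) (χ : Fml) :
    ktruth (smp_MA2 M h0 h1 w0) (.cstit i χ) x ↔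
      ktruth (smp_MA2 M h0 h1 w0) (.cstit i χ) u := by
  constructor
  · intro hh z hz
    exact hh z (((smp_MA2 M h0 h1 w0).equiv i hi).trans h hz)
  · intro hh z hz
    exact hh z (((smp_MA2 M h0 h1 w0).equiv i hi).trans
      (((smp_MA2 M h0 h1 w0).equiv i hi).symm h) hz)

/-- The filtrated small model. -/
noncomputable def smp_MA3 (h0 : 0 ∈ Agt) (h1 : 1 ∈ Agt) (w0 : M.W) (φ : Fml) : KModel Agt where
  W := ↥(Set.range (smp_th M h0 h1 w0 φ))
  neW := ⟨⟨smp_th M h0 h1 w0 φ ⟨w0, smp_E_refl M h0 h1 w0⟩, ⟨_, rfl⟩⟩⟩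
  R := fun i f g => ∀ χ : Fml, Fml.cstit i χ ∈ sf φ →
    (Fml.cstit i χ ∈ f.1 ↔ Fml.cstit i χ ∈ g.1)
  equiv := fun i _ =>
    ⟨fun f χ _ => Iff.rfl, fun h χ hχ => (h χ hχ).symm,
      fun h h' χ hχ => (h χ hχ).trans (h' χ hχ)⟩
  V := fun p => {f | Fml.atm p ∈ f.1}

lemma smp_MA3_R (h0 : 0 ∈ Agt) (h1 : 1 ∈ Agt) (w0 : M.W) (φ : Fml) {i : ℕ} (hi : i ∈ Agt) {x u : (smp_MA2 M h0 h1 w0).W}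
    (h : (smp_MA2 M h0 h1 w0).R i x u)
    (f g : (smp_MA3 M h0 h1 w0 φ).W)
    (hf : smp_th M h0 h1 w0 φ x = f.1) (hg : smp_th M h0 h1 w0 φ u = g.1) :
    (smp_MA3 M h0 h1 w0 φ).R i f g := by
  intro χ hχ
  rw [← hf, ← hg, smp_th_mem M h0 h1 w0 φ hχ, smp_th_mem M h0 h1 w0 φ hχ]
  exact smp_agree M h0 h1 w0 hi h χ

theorem smp_MA3_tlem (h0 : 0 ∈ Agt) (h1 : 1 ∈ Agt) (hGP : GenPerm M) (w0 : M.W) (φ : Fml) :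
    ∀ ψ : Fml, ψ ∈ sf φ → NoDstit ψ → AgentsIn Agt ψ →
      ∀ (f : (smp_MA3 M h0 h1 w0 φ).W) (x : (smp_MA2 M h0 h1 w0).W),
        smp_th M h0 h1 w0 φ x = f.1 →
        (ktruth (smp_MA3 M h0 h1 w0 φ) ψ f ↔ ktruth (smp_MA2 M h0 h1 w0) ψ x) := by
  intro ψ
  induction ψ with
  | atm a =>
      intro hmem _ _ f x hf
      show Fml.atm a ∈ f.1 ↔ _
      rw [← hf]
      exact smp_th_mem M h0 h1 w0 φ hmem x
  | neg χ ih =>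
      intro hmem hND hAI f x hf
      have hχ : χ ∈ sf φ := smp_sf_sub φ _ hmem (by
        simp only [sf]
        exact Finset.mem_insert_of_mem (smp_mem_sf_self χ))
      exact not_congr (ih hχ hND hAI f x hf)
  | and A B ihA ihB =>
      intro hmem hND hAI f x hf
      have hA : A ∈ sf φ := smp_sf_sub φ _ hmem (by
        simp only [sf]
        exact Finset.mem_insert_of_mem (Finset.mem_union_left _ (smp_mem_sf_self A)))
      have hB : B ∈ sf φ := smp_sf_sub φ _ hmem (by
        simp only [sf]
        exact Finset.mem_insert_of_mem (Finset.mem_union_right _ (smp_mem_sf_self B)))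
      exact and_congr (ihA hA hND.1 hAI.1 f x hf) (ihB hB hND.2 hAI.2 f x hf)
  | cstit i χ ih =>
      intro hmem hND hAI f x hf
      have hi : i ∈ Agt := hAI.1
      have hχ : χ ∈ sf φ := smp_sf_sub φ _ hmem (by
        simp only [sf]
        exact Finset.mem_insert_of_mem (smp_mem_sf_self χ))
      constructor
      · intro h3 v hv
        set g : (smp_MA3 M h0 h1 w0 φ).W := ⟨smp_th M h0 h1 w0 φ v, ⟨v, rfl⟩⟩ with hgdef
        have hRg : (smp_MA3 M h0 h1 w0 φ).R i f g :=
          smp_MA3_R M h0 h1 w0 φ hi hv f g hf rfl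
        exact (ih hχ hND hAI.2 g v rfl).1 (h3 g hRg)
      · intro h2 g hg
        obtain ⟨y, hy⟩ := g.2
        refine (ih hχ hND hAI.2 g y hy).2 ?_
        have hx : Fml.cstit i χ ∈ f.1 := by
          rw [← hf, smp_th_mem M h0 h1 w0 φ hmem]
          exact h2
        have hyy : Fml.cstit i χ ∈ smp_th M h0 h1 w0 φ y := by
          rw [hy]
          exact (hg χ hmem).1 hx
        have := (smp_th_mem M h0 h1 w0 φ hmem y).1 hyy
        exact this y (((smp_MA2 M h0 h1 w0).equiv i hi).refl y)
  | dstit i χ ih =>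
      intro _ hND _ _ _ _
      exact absurd hND (by simp [NoDstit])
  | box χ ih =>
      intro hmem hND hAI f x hf
      have hχ : χ ∈ sf φ := smp_sf_sub φ _ hmem (by
        simp only [sf]
        exact Finset.mem_insert_of_mem (smp_mem_sf_self χ))
      constructor
      · intro h3 v hv
        obtain ⟨u, h1u, h0uv⟩ := hv
        set g : (smp_MA3 M h0 h1 w0 φ).W := ⟨smp_th M h0 h1 w0 φ v, ⟨v, rfl⟩⟩ with hgdef
        set hh : (smp_MA3 M h0 h1 w0 φ).W := ⟨smp_th M h0 h1 w0 φ u, ⟨u, rfl⟩⟩ with hhdef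
        have hcomp : Relation.Comp ((smp_MA3 M h0 h1 w0 φ).R 1)
            ((smp_MA3 M h0 h1 w0 φ).R 0) f g := by
          refine ⟨hh, ?_, ?_⟩
          · exact smp_MA3_R M h0 h1 w0 φ h1 h1u f hh hf rfl
          · exact smp_MA3_R M h0 h1 w0 φ h0 h0uv hh g rfl rfl
        exact (ih hχ hND hAI g v rfl).1 (h3 g hcomp)
      · intro h2 g hg
        obtain ⟨y, hy⟩ := g.2
        refine (ih hχ hND hAI g y hy).2 ?_
        exact h2 y (smp_MA2_total M h0 h1 hGP w0 x y)

theorem smp_MA3_genPerm (h0 : 0 ∈ Agt) (h1 : 1 ∈ Agt) (hGP : GenPerm M) (w0 : M.W) (φ : Fml) : GenPerm (smp_MA3 M h0 h1 w0 φ) := by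
  intro f g l hl m hm n hn _
  obtain ⟨x, hx⟩ := f.2
  obtain ⟨y, hy⟩ := g.2
  obtain ⟨u, hnu, hrest⟩ := smp_MA2_genPerm M h0 h1 hGP w0 x y 1 h1 0 h0 n hn
    (smp_MA2_total M h0 h1 hGP w0 x y)
  set uu : (smp_MA3 M h0 h1 w0 φ).W := ⟨smp_th M h0 h1 w0 φ u, ⟨u, rfl⟩⟩ with huu
  refine ⟨uu, smp_MA3_R M h0 h1 w0 φ hn hnu f uu hx rfl, ?_⟩
  intro i hi hne
  exact smp_MA3_R M h0 h1 w0 φ hi (hrest i hi hne) uu g rfl hy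

theorem smp_MA3_card (h0 : 0 ∈ Agt) (h1 : 1 ∈ Agt) (w0 : M.W) (φ : Fml) : Cardinal.mk (smp_MA3 M h0 h1 w0 φ).W ≤ 2 ^ len φ := by
  have hinj : ∃ f : (smp_MA3 M h0 h1 w0 φ).W → ↥((sf φ).powerset), Function.Injective f := by
    refine ⟨fun f => ⟨f.1, ?_⟩, ?_⟩
    · obtain ⟨x, hx⟩ := f.2
      rw [Finset.mem_powerset, ← hx]
      exact Finset.filter_subset _ _
    · intro f g hfg
      apply Subtype.ext
      have := congrArg Subtype.val hfg
      simpa using this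
  obtain ⟨f, hf⟩ := hinj
  have h1' : Cardinal.mk (smp_MA3 M h0 h1 w0 φ).W ≤ Cardinal.mk ↥((sf φ).powerset) :=
    Cardinal.mk_le_of_injective hf
  have h2 : Cardinal.mk ↥((sf φ).powerset) = (((sf φ).powerset.card : ℕ) : Cardinal) :=
    Cardinal.mk_coe_finset
  have h3 : (sf φ).powerset.card = 2 ^ (sf φ).card := Finset.card_powerset _
  have h4 : (2 : ℕ) ^ (sf φ).card ≤ 2 ^ len φ :=
    Nat.pow_le_pow_right (by norm_num) (smp_sf_card_le_len φ)
  calc Cardinal.mk (smp_MA3 M h0 h1 w0 φ).W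
      ≤ (((sf φ).powerset.card : ℕ) : Cardinal) := h2 ▸ h1'
    _ ≤ ((2 ^ len φ : ℕ) : Cardinal) := by
        rw [h3]; exact_mod_cast h4
    _ = (2 : Cardinal) ^ len φ := smp_cast_pow_two (len φ)

theorem smp_caseA (h0 : 0 ∈ Agt) (h1 : 1 ∈ Agt) (hGP : GenPerm M) (w0 : M.W) (φ : Fml) (hND : NoDstit φ) (hAI : AgentsIn Agt φ) (hw0 : ktruth M φ w0) :
    ∃ M' : KModel Agt, GenPerm M' ∧ (∃ w : M'.W, ktruth M' φ w) ∧
      Cardinal.mk M'.W ≤ 2 ^ len φ := by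
  refine ⟨smp_MA3 M h0 h1 w0 φ, smp_MA3_genPerm M h0 h1 hGP w0 φ, ⟨?_, ?_⟩,
    smp_MA3_card M h0 h1 w0 φ⟩
  · exact ⟨smp_th M h0 h1 w0 φ ⟨w0, smp_E_refl M h0 h1 w0⟩, ⟨_, rfl⟩⟩
  · have hx : ktruth (smp_MA2 M h0 h1 w0) φ ⟨w0, smp_E_refl M h0 h1 w0⟩ :=
      (smp_MA2_ktruth M h0 h1 hGP w0 φ hND hAI ⟨w0, smp_E_refl M h0 h1 w0⟩).2 hw0
    exact (smp_MA3_tlem M h0 h1 hGP w0 φ φ (smp_mem_sf_self φ) hND hAI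
      ⟨smp_th M h0 h1 w0 φ ⟨w0, smp_E_refl M h0 h1 w0⟩, ⟨_, rfl⟩⟩
      ⟨w0, smp_E_refl M h0 h1 w0⟩ rfl).2 hx

end CaseA
/-- If a formula `φ` of `L_CSTIT` is satisfiable in some Kripke
model in which each `R i` is an equivalence relation and `R` satisfies the
general permutation property, then `φ` is satisfiable in such a Kripke model
`⟨W',R',V'⟩` with `|W'| ≤ 2^{‖φ‖}`. -/
theorem small_model_property (Agt : Set ℕ) (hAgt : InitSeg Agt)
    (φ : Fml) (hφ : NoDstit φ) (hφA : AgentsIn Agt φ)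
    (hsat : satK Agt φ) :
    ∃ M : KModel Agt, GenPerm M ∧ (∃ w : M.W, ktruth M φ w) ∧
      Cardinal.mk M.W ≤ 2 ^ len φ := by
  obtain ⟨M, hGP, w0, hw0⟩ := hsat
  by_cases h1 : 1 ∈ Agt
  · exact smp_caseA M (hAgt 1 h1 0 (by norm_num)) h1 hGP w0 φ hφ hφA hw0
  · have h01 : ∀ i ∈ Agt, i = 0 := by
      intro i hi
      by_contra hne
      exact h1 (hAgt i hi 1 (by omega))
    exact smp_caseB (smp_Mt M h1) φ h01 (smp_Mt_R0_equiv M h1) hφ hφA w0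
      ((smp_Mt_ktruth M h1 φ hφ hφA w0).mpr hw0)

end STIT
end

section
/- Let Agt be a set of agents with {0,1} ⊊ Agt, and let φ be a formula of L_CSTIT in which only the agent symbols 0 and 1 occur. Then φ is satisfiable in a Kripke model over the agent set {0,1} (each relation an equivalence relation, satisfying the general permutation property) if and only if φ is satisfiable in such a Kripke model over the agent set Agt; equivalently, the logic of Kripke models for Agt is a conservative extension of that for {0,1}. -/
/-! Common infrastructure for STIT logic (Chellas STIT, deliberative STIT,
historic necessity), following Balbiani, Herzig & Troquard,
"Alternative axiomatics and complexity of deliberative STIT theories". -/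

namespace STIT

section Conservative

private lemma mem01_0 : (0:ℕ) ∈ ({0,1} : Set ℕ) := by simp
private lemma mem01_1 : (1:ℕ) ∈ ({0,1} : Set ℕ) := by simp

variable (M : KModel ({0,1} : Set ℕ))

/-- The composite relation `R0 ∘ R1`. -/
def Scomp : M.W → M.W → Prop := Relation.Comp (M.R 0) (M.R 1)

variable (hg : GenPerm M)
include hg

private lemma eq0 : Equivalence (M.R 0) := M.equiv 0 mem01_0
private lemma eq1 : Equivalence (M.R 1) := M.equiv 1 mem01_1

private lemma swap10 : ∀ {w v : M.W}, Relation.Comp (M.R 1) (M.R 0) w v → Scomp M w v := by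
  intro w v h
  obtain ⟨u, hu, hn⟩ := hg w v 1 mem01_1 0 mem01_0 0 mem01_0 h
  exact ⟨u, hu, hn 1 mem01_1 one_ne_zero⟩

private lemma S_refl : ∀ w : M.W, Scomp M w w :=
  fun w => ⟨w, (eq0 M hg).refl w, (eq1 M hg).refl w⟩

private lemma S_symm : ∀ {w v : M.W}, Scomp M w v → Scomp M v w := by
  rintro w v ⟨a, h0a, h1a⟩
  exact swap10 M hg ⟨a, (eq1 M hg).symm h1a, (eq0 M hg).symm h0a⟩

private lemma S_trans : ∀ {w v x : M.W}, Scomp M w v → Scomp M v x → Scomp M w x := by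
  rintro w v x ⟨a, wa, av⟩ ⟨b, vb, bx⟩
  obtain ⟨c, ac, cb⟩ := swap10 M hg ⟨v, av, vb⟩
  exact ⟨c, (eq0 M hg).trans wa ac, (eq1 M hg).trans cb bx⟩

private lemma R0_sub : ∀ {w v : M.W}, M.R 0 w v → Scomp M w v :=
  fun h => ⟨_, h, (eq1 M hg).refl _⟩

private lemma R1_sub : ∀ {w v : M.W}, M.R 1 w v → Scomp M w v :=
  fun {w v} h => swap10 M hg ⟨v, h, (eq0 M hg).refl v⟩

private lemma swap01 : ∀ {w v : M.W}, Scomp M w v → Relation.Comp (M.R 1) (M.R 0) w v := by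
  intro w v h
  obtain ⟨a, h0, h1⟩ := S_symm M hg h
  exact ⟨a, (eq1 M hg).symm h1, (eq0 M hg).symm h0⟩

/-- Extension of a `{0,1}`-model to the agent set `Agt`, interpreting every new
agent by the composite relation. -/
def extendK (Agt : Set ℕ) : KModel Agt where
  W := M.W
  neW := M.neW
  R := fun i => if i = 0 ∨ i = 1 then M.R i else Scomp M
  equiv := by
    intro i _
    by_cases h : i = 0 ∨ i = 1
    · simp only [if_pos h]
      rcases h with rfl | rfl
      · exact eq0 M hg
      · exact eq1 M hg
    · simp only [if_neg h]
      exact ⟨S_refl M hg, fun h => S_symm M hg h, fun h h' => S_trans M hg h h'⟩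
  V := M.V

private lemma extR_eq {Agt : Set ℕ} {j : ℕ} (hj : j = 0 ∨ j = 1) :
    (extendK M hg Agt).R j = M.R j := if_pos hj

private lemma extR_eq' {Agt : Set ℕ} {j : ℕ} (hj : ¬ (j = 0 ∨ j = 1)) :
    (extendK M hg Agt).R j = Scomp M := if_neg hj

private lemma extR_sub {Agt : Set ℕ} {j : ℕ} {a b : M.W}
    (h : (extendK M hg Agt).R j a b) : Scomp M a b := by
  by_cases hj : j = 0 ∨ j = 1
  · rw [extR_eq M hg hj] at h
    rcases hj with rfl | rfl
    · exact R0_sub M hg h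
    · exact R1_sub M hg h
  · rwa [extR_eq' M hg hj] at h

private lemma genperm_extend (Agt : Set ℕ) : GenPerm (extendK M hg Agt) := by
  intro w v l _ m _ n _ hcomp
  obtain ⟨x, hwx, hxv⟩ := hcomp
  have hS : Scomp M w v :=
    S_trans M hg (extR_sub M hg hwx) (extR_sub M hg hxv)
  by_cases hn : n = 0 ∨ n = 1
  · rcases hn with rfl | rfl
    · obtain ⟨u, hwu, huv⟩ := hS
      refine ⟨u, ?_, ?_⟩
      · rw [extR_eq M hg (Or.inl rfl)]; exact hwu
      · intro i _ hi
        by_cases hij : i = 0 ∨ i = 1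
        · rcases hij with rfl | rfl
          · exact absurd rfl hi
          · rw [extR_eq M hg (Or.inr rfl)]; exact huv
        · rw [extR_eq' M hg hij]; exact R1_sub M hg huv
    · obtain ⟨u, hwu, huv⟩ := swap01 M hg hS
      refine ⟨u, ?_, ?_⟩
      · rw [extR_eq M hg (Or.inr rfl)]; exact hwu
      · intro i _ hi
        by_cases hij : i = 0 ∨ i = 1
        · rcases hij with rfl | rfl
          · rw [extR_eq M hg (Or.inl rfl)]; exact huv
          · exact absurd rfl hi
        · rw [extR_eq' M hg hij]; exact R0_sub M hg huv
  · refine ⟨v, ?_, ?_⟩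
    · rw [extR_eq' M hg hn]; exact hS
    · intro i _ _
      by_cases hij : i = 0 ∨ i = 1
      · rw [extR_eq M hg hij]
        rcases hij with rfl | rfl
        · exact (eq0 M hg).refl v
        · exact (eq1 M hg).refl v
      · rw [extR_eq' M hg hij]; exact S_refl M hg v

private lemma ktruth_extend (Agt : Set ℕ) :
    ∀ ψ : Fml, NoDstit ψ → AgentsIn {0,1} ψ → ∀ w : M.W,
      ktruth (extendK M hg Agt) ψ w ↔ ktruth M ψ w := by
  intro ψ
  induction ψ with
  | atm p => intro _ _ w; exact Iff.rfl
  | neg φ ih => intro hd ha w; exact not_congr (ih hd ha w)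
  | and φ ψ ihφ ihψ =>
      intro hd ha w; exact and_congr (ihφ hd.1 ha.1 w) (ihψ hd.2 ha.2 w)
  | cstit i φ ih =>
      intro hd ha w
      have hi : i = 0 ∨ i = 1 := by
        have := ha.1; simpa using this
      show (∀ u, (extendK M hg Agt).R i w u → _) ↔ _
      rw [extR_eq M hg hi]
      exact forall_congr' fun u => imp_congr Iff.rfl (ih hd ha.2 u)
  | dstit i φ ih => intro hd _ _; exact hd.elim
  | box φ ih =>
      intro hd ha w
      show (∀ u, Relation.Comp ((extendK M hg Agt).R 1) ((extendK M hg Agt).R 0) w u → _) ↔ _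
      rw [extR_eq M hg (Or.inr rfl), extR_eq M hg (Or.inl rfl)]
      exact forall_congr' fun u => imp_congr Iff.rfl (ih hd ha u)

/-- Restriction of an `Agt`-model to the agent set `{0,1}`. -/
def restrictK {Agt : Set ℕ} (N : KModel Agt) (h0 : (0:ℕ) ∈ Agt) (h1 : (1:ℕ) ∈ Agt) :
    KModel ({0,1} : Set ℕ) where
  W := N.W
  neW := N.neW
  R := N.R
  equiv := by
    intro i hi
    have : i = 0 ∨ i = 1 := by simpa using hi
    rcases this with rfl | rfl
    · exact N.equiv 0 h0
    · exact N.equiv 1 h1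
  V := N.V

omit M hg in
private lemma ktruth_restrict {Agt : Set ℕ} (N : KModel Agt)
    (h0 : (0:ℕ) ∈ Agt) (h1 : (1:ℕ) ∈ Agt) :
    ∀ ψ : Fml, ∀ w : N.W, ktruth (restrictK N h0 h1) ψ w ↔ ktruth N ψ w := by
  intro ψ
  induction ψ with
  | atm p => intro w; exact Iff.rfl
  | neg φ ih => intro w; exact not_congr (ih w)
  | and φ ψ ihφ ihψ => intro w; exact and_congr (ihφ w) (ihψ w)
  | cstit i φ ih =>
      intro w; exact forall_congr' fun u => imp_congr Iff.rfl (ih u)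
  | dstit i φ ih =>
      intro w
      exact and_congr (forall_congr' fun u => imp_congr Iff.rfl (ih u))
        (exists_congr fun u => and_congr Iff.rfl (not_congr (ih u)))
  | box φ ih =>
      intro w; exact forall_congr' fun u => imp_congr Iff.rfl (ih u)

omit M hg in
private lemma genperm_restrict {Agt : Set ℕ} (N : KModel Agt) (hgN : GenPerm N)
    (hsub : ({0,1} : Set ℕ) ⊆ Agt) (h0 : (0:ℕ) ∈ Agt) (h1 : (1:ℕ) ∈ Agt) :
    GenPerm (restrictK N h0 h1) := by
  intro w v l hl m hm n hn hcomp
  obtain ⟨u, hu, hf⟩ := hgN w v l (hsub hl) m (hsub hm) n (hsub hn) hcomp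
  exact ⟨u, hu, fun i hi hin => hf i (hsub hi) hin⟩

end Conservative

/-- Let `{0,1} ⊊ Agt` and let `φ` be a formula of `L_CSTIT` in
which only the agent symbols `0` and `1` occur. Then `φ` is satisfiable in a
Kripke model over the agent set `{0,1}` (each relation an equivalence
relation, satisfying the general permutation property) iff `φ` is
satisfiable in such a Kripke model over the agent set `Agt` (conservative
extension). -/
theorem conservative_extension (Agt : Set ℕ) (hAgt : InitSeg Agt)
    (hsub : ({0, 1} : Set ℕ) ⊂ Agt)
    (φ : Fml) (hφ : NoDstit φ) (hφA : AgentsIn {0, 1} φ) :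
    satK {0, 1} φ ↔ satK Agt φ := by
  have h0 : (0:ℕ) ∈ Agt := hsub.subset (by simp)
  have h1 : (1:ℕ) ∈ Agt := hsub.subset (by simp)
  constructor
  · rintro ⟨M, hg, w, hw⟩
    exact ⟨extendK M hg Agt, genperm_extend M hg Agt, w,
      (ktruth_extend M hg Agt φ hφ hφA w).mpr hw⟩
  · rintro ⟨N, hgN, w, hw⟩
    exact ⟨restrictK N h0 h1, genperm_restrict N hgN hsub.subset h0 h1, w,
      (ktruth_restrict N h0 h1 φ w).mpr hw⟩

end STIT
end
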